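/- arXiv:0907.1540 — 3 statements merged into one kernel-verified Lean document; each statement's English description precedes it below -/
import Mathlib

section
/- Let Q be an n×n matrix such that: q_{ij} ∈ {0,1} for all i > 1; q_{ij} = 1 whenever i = j+1; q_{ij} = 0 whenever i > j+1; and q_{1j} = Q₁/Q_j for 1 ≤ j ≤ n, where Q₁,…,Qₙ are irreducible, pairwise coprime polynomials of positive degree with positive variables. Then det(Q) is a nonzero rational function. -/
/-- Determinant lemma for almost-triangular matrices over the field of rational
functions: if `M i j ∈ {0,1}` for `i > 0`, `M i j = 1` on the subdiagonal,
`M i j = 0` below the subdiagonal, and the first row is `Q 0 / Q j` where the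
`Q j` are irreducible, pairwise coprime polynomials of positive degree, then
`det M` is a nonzero rational function. -/
theorem det_almost_triangular_ne_zero
    {σ : Type} (n : ℕ) (hn : 0 < n)
    (Q : Fin n → MvPolynomial σ ℝ)
    (hirr : ∀ i, Irreducible (Q i))
    (hcop : ∀ i j, i ≠ j → IsCoprime (Q i) (Q j))
    (hdeg : ∀ i, 0 < (Q i).totalDegree)
    (M : Matrix (Fin n) (Fin n) (FractionRing (MvPolynomial σ ℝ)))
    (h01 : ∀ i j : Fin n, 0 < i.val → M i j = 0 ∨ M i j = 1)
    (hsub : ∀ i j : Fin n, i.val = j.val + 1 → M i j = 1)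
    (hlow : ∀ i j : Fin n, j.val + 1 < i.val → M i j = 0)
    (hrow : ∀ j : Fin n, M ⟨0, hn⟩ j =
        algebraMap (MvPolynomial σ ℝ) (FractionRing (MvPolynomial σ ℝ)) (Q ⟨0, hn⟩) /
        algebraMap (MvPolynomial σ ℝ) (FractionRing (MvPolynomial σ ℝ)) (Q j)) :
    M.det ≠ 0 := by
  classical
  cases n with
  | zero => omega
  | succ m =>
  set f := algebraMap (MvPolynomial σ ℝ) (FractionRing (MvPolynomial σ ℝ)) with hfdef
  set φ := algebraMap ℝ (FractionRing (MvPolynomial σ ℝ)) with hφdef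
  have hfinj : Function.Injective f :=
    IsFractionRing.injective (MvPolynomial σ ℝ) (FractionRing (MvPolynomial σ ℝ))
  have hφinj : Function.Injective φ := RingHom.injective φ
  have hQne : ∀ j : Fin (m+1), Q j ≠ 0 := fun j => (hirr j).ne_zero
  have hfQ : ∀ j : Fin (m+1), f (Q j) ≠ 0 := fun j =>
    fun h => hQne j (hfinj (by simpa using h))
  have h0 : (⟨0, hn⟩ : Fin (m+1)) = 0 := rfl
  rw [h0] at hrow
  -- the minor determinants are scalars
  have hminor : ∀ j : Fin (m+1), ∃ c : ℝ,
      (M.submatrix Fin.succ j.succAbove).det = φ c := by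
    intro j
    set N : Matrix (Fin m) (Fin m) ℝ := fun i k =>
      if M i.succ (j.succAbove k) = 1 then 1 else 0 with hN
    refine ⟨N.det, ?_⟩
    have hMN : M.submatrix Fin.succ j.succAbove = N.map φ := by
      funext i k
      rcases h01 i.succ (j.succAbove k) (Nat.succ_pos _) with h | h
      · rw [Matrix.map_apply]; simp [Matrix.submatrix_apply, hN, h, Matrix.map_apply]
      · rw [Matrix.map_apply]; simp [Matrix.submatrix_apply, hN, h, Matrix.map_apply]
    rw [hMN]
    exact (RingHom.map_det φ N).symm
  choose r hr using hminor
  -- the last minor is 1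
  have hrlast : r (Fin.last m) = 1 := by
    have hsub1 : (M.submatrix Fin.succ (Fin.last m).succAbove).det = 1 := by
      have htri : (M.submatrix Fin.succ (Fin.last m).succAbove).BlockTriangular id := by
        intro i k hk
        simp only [Matrix.submatrix_apply, Fin.succAbove_last]
        exact hlow i.succ k.castSucc (by simpa using Nat.succ_lt_succ hk)
      rw [Matrix.det_of_upperTriangular htri]
      apply Finset.prod_eq_one
      intro i _
      simp only [Matrix.submatrix_apply, Fin.succAbove_last]
      exact hsub i.succ i.castSucc rfl
    have h1 : φ (r (Fin.last m)) = φ 1 := by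
      rw [← hr (Fin.last m), hsub1, map_one]
    exact hφinj h1
  -- the determinant expansion
  have hdet : M.det = ∑ j : Fin (m+1),
      (-1 : FractionRing (MvPolynomial σ ℝ)) ^ (j : ℕ) * (f (Q 0) / f (Q j)) * φ (r j) := by
    rw [Matrix.det_succ_row_zero]
    refine Finset.sum_congr rfl fun j _ => ?_
    rw [hr j, hrow j]
  intro hzero
  -- pull back to the polynomial ring
  have halg : ∀ a : ℝ, f (MvPolynomial.C a) = φ a := by
    intro a
    rw [hfdef, hφdef, ← MvPolynomial.algebraMap_eq, ← IsScalarTower.algebraMap_apply]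
  set S : MvPolynomial σ ℝ := ∑ j : Fin (m+1),
      (-1 : MvPolynomial σ ℝ) ^ (j : ℕ) * MvPolynomial.C (r j) *
        (Q 0 * ∏ k ∈ Finset.univ.erase j, Q k) with hS
  have hfS : f S = M.det * ∏ k : Fin (m+1), f (Q k) := by
    rw [hS, map_sum, hdet, Finset.sum_mul]
    refine Finset.sum_congr rfl fun j _ => ?_
    rw [map_mul, map_mul, map_mul, map_prod, map_pow, map_neg, map_one, halg,
      ← Finset.mul_prod_erase _ _ (Finset.mem_univ j)]
    have hne := hfQ j
    field_simp
  rw [hzero, zero_mul] at hfS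
  have hS0 : S = 0 := hfinj (by simpa using hfS)
  -- Q last divides the last term
  have hprime : Prime (Q (Fin.last m)) :=
    (UniqueFactorizationMonoid.irreducible_iff_prime).mp (hirr _)
  have hdvd : Q (Fin.last m) ∣ (-1 : MvPolynomial σ ℝ) ^ (m : ℕ) * MvPolynomial.C (r (Fin.last m)) *
      (Q 0 * ∏ k ∈ Finset.univ.erase (Fin.last m), Q k) := by
    have hsplit : S = ((-1 : MvPolynomial σ ℝ) ^ (m : ℕ) * MvPolynomial.C (r (Fin.last m)) *
        (Q 0 * ∏ k ∈ Finset.univ.erase (Fin.last m), Q k)) +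
        ∑ j ∈ Finset.univ.erase (Fin.last m),
          (-1 : MvPolynomial σ ℝ) ^ (j : ℕ) * MvPolynomial.C (r j) *
            (Q 0 * ∏ k ∈ Finset.univ.erase j, Q k) := by
      rw [hS, ← Finset.add_sum_erase _ _ (Finset.mem_univ (Fin.last m))]
      simp
    have hrest : Q (Fin.last m) ∣ ∑ j ∈ Finset.univ.erase (Fin.last m),
        (-1 : MvPolynomial σ ℝ) ^ (j : ℕ) * MvPolynomial.C (r j) *
          (Q 0 * ∏ k ∈ Finset.univ.erase j, Q k) := by
      refine Finset.dvd_sum fun j hj => ?_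
      have hjne : j ≠ Fin.last m := (Finset.mem_erase.mp hj).1
      have hmem : Fin.last m ∈ Finset.univ.erase j :=
        Finset.mem_erase.mpr ⟨fun h => hjne h.symm, Finset.mem_univ _⟩
      have : Q (Fin.last m) ∣ ∏ k ∈ Finset.univ.erase j, Q k :=
        Finset.dvd_prod_of_mem _ hmem
      exact Dvd.dvd.mul_left (Dvd.dvd.mul_left this _) _
    have heq : ((-1 : MvPolynomial σ ℝ) ^ (m : ℕ) * MvPolynomial.C (r (Fin.last m)) *
        (Q 0 * ∏ k ∈ Finset.univ.erase (Fin.last m), Q k)) =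
        S - ∑ j ∈ Finset.univ.erase (Fin.last m),
          (-1 : MvPolynomial σ ℝ) ^ (j : ℕ) * MvPolynomial.C (r j) *
            (Q 0 * ∏ k ∈ Finset.univ.erase j, Q k) := by
      rw [hsplit]; ring
    rw [heq, hS0, zero_sub]
    exact dvd_neg.mpr hrest
  -- simplify the last term
  rw [hrlast, map_one, mul_one] at hdvd
  have hdvd2 : Q (Fin.last m) ∣ Q 0 * ∏ k ∈ Finset.univ.erase (Fin.last m), Q k := by
    rcases Nat.even_or_odd m with he | ho
    · rwa [he.neg_one_pow, one_mul] at hdvd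
    · rw [ho.neg_one_pow, neg_one_mul, dvd_neg] at hdvd
      exact hdvd
  -- derive a contradiction
  rcases Nat.eq_zero_or_pos m with hm0 | hm
  · -- n = 1 : det = 1 directly
    subst hm0
    have h1 : M.det = M 0 0 := Matrix.det_fin_one M
    rw [hzero] at h1
    rw [hrow 0, div_self (hfQ 0)] at h1
    exact one_ne_zero h1.symm
  · have hlne : Fin.last m ≠ 0 := by
      intro h
      have := congrArg Fin.val h
      simp [Fin.last] at this
      omega
    rcases hprime.dvd_mul.mp hdvd2 with h | h
    · exact hprime.not_unit ((hcop _ _ hlne).isUnit_of_dvd h)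
    · rw [Prime.dvd_finset_prod_iff hprime] at h
      obtain ⟨k, hk, hdk⟩ := h
      have hkne : Fin.last m ≠ k := fun hh => (Finset.mem_erase.mp hk).1 hh.symm
      exact hprime.not_unit ((hcop _ _ hkne).isUnit_of_dvd hdk)
end

section
/- If two processes s and t are probabilistically ready trace equivalent (s ≈_O t), then they are testing equivalent (s ≈_T t): Res(s,T) = Res(t,T) for every test T. -/
inductive Proc (A : Type) where
  | nd : List (A × Proc A) → Proc A
  | pr : List (ℝ × Proc A) → Proc A

namespace Proc

variable {A : Type} [DecidableEq A]

/-- The menu of a nondeterministic state: the set of initially enabled actions. -/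
def menu : Proc A → Finset A
  | nd l => (l.map Prod.fst).toFinset
  | pr _ => ∅

/-- Deterministic action transition. -/
def step : Proc A → A → Option (Proc A)
  | nd l, a => (l.find? (fun x => x.1 = a)).map Prod.snd
  | pr _, _ => none

/-- P¹ₛ(M) : the probability that the initial menu observed is M. -/
noncomputable def P1 : Proc A → Finset A → ℝ
  | nd l, M => if (l.map Prod.fst).toFinset = M then 1 else 0
  | pr l, M => (l.attach.map (fun x => x.1.1 * P1 x.1.2 M)).sum
termination_by p _ => sizeOf p
decreasing_by
  obtain ⟨⟨r, p⟩, hmem⟩ := x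
  have h := List.sizeOf_lt_of_mem hmem
  simp at h ⊢
  omega

end Proc
/-- Flattening used when a probabilistic transition would lead to a probabilistic state. -/
def flat {A : Type} (w : ℝ) : Proc A → List (ℝ × Proc A)
  | Proc.pr l => l.map (fun x => (w * x.1, x.2))
  | q => [(w, q)]

namespace Proc

variable {A : Type} [DecidableEq A]

/-- The derived process s_{(M,a)} : the process that `s` becomes, given that the
menu `M` was offered and the action `a ∈ M` was performed. -/
noncomputable def after : Proc A → Finset A → A → Option (Proc A)
  | nd l, M, a => if (l.map Prod.fst).toFinset = M then step (nd l) a else none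
  | pr l, M, a =>
      let sel := l.filter (fun x => x.2.menu = M)
      let tot := (sel.map Prod.fst).sum
      let entries := sel.flatMap (fun x =>
        match x.2.step a with
        | none => []
        | some q => flat (x.1 / tot) q)
      if entries.isEmpty then none else some (pr entries)

/-- The conditional ready-trace probability
`P_sⁿ(M | M₁,a₁,…,a_{n-1})`, where `none` represents undefinedness. -/
noncomputable def Pn : Proc A → List (Finset A × A) → Finset A → Option ℝ
  | s, [], M => some (P1 s M)
  | s, Ma :: rest, M =>
      if 0 < P1 s Ma.1 then (after s Ma.1 Ma.2).bind (fun s' => Pn s' rest M)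
      else none

/-- Probabilistic ready trace equivalence `≈_O`. -/
noncomputable def RTEquiv (s t : Proc A) : Prop :=
  ∀ (tr : List (Finset A × A)) (M : Finset A), Pn s tr M = Pn t tr M

/-- Well-formed process graphs: action-deterministic menus, probabilities in (0,1]
summing to one, and probabilistic transitions leading to nondeterministic states. -/
inductive WF : Proc A → Prop
  | nd (l : List (A × Proc A)) :
      (l.map Prod.fst).Nodup → (∀ x ∈ l, WF x.2) → WF (.nd l)
  | pr (l : List (ℝ × Proc A)) :
      (∀ x ∈ l, 0 < x.1 ∧ x.1 ≤ 1 ∧ ∃ l', x.2 = Proc.nd l') →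
      (l.map Prod.fst).sum = 1 →
      (∀ x ∈ l, WF x.2) → WF (.pr l)

end Proc
/-- The field of rational functions whose argument names are the action labels. -/
abbrev RF (A : Type) := FractionRing (MvPolynomial A ℝ)

/-- The rational function consisting of the single variable named by action `a`. -/
noncomputable def RVar {A : Type} (a : A) : RF A :=
  algebraMap (MvPolynomial A ℝ) (RF A) (MvPolynomial.X a)

namespace Proc

variable {A : Type} [DecidableEq A]

/-- A state can immediately report success. -/
def hasOmega (ω : A) : Proc A → Prop
  | nd l => ω ∈ l.map Prod.fst
  | pr _ => False

/-- `ResRel ω s T r` : the result of testing process `s` with test `T` is the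
rational function `r` (ω is the success action of tests). -/
inductive ResRel (ω : A) : Proc A → Proc A → RF A → Prop
  | success (s : Proc A) (l : List (A × Proc A)) (h : ω ∈ l.map Prod.fst) :
      ResRel ω s (.nd l) 1
  | probL (l : List (ℝ × Proc A)) (T : Proc A) (r : ℝ × Proc A → RF A)
      (hT : ¬ hasOmega ω T)
      (h : ∀ x ∈ l, ResRel ω x.2 T (r x)) :
      ResRel ω (.pr l) T ((l.map (fun x => algebraMap ℝ (RF A) x.1 * r x)).sum)
  | probR (l : List (A × Proc A)) (l' : List (ℝ × Proc A)) (r : ℝ × Proc A → RF A)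
      (h : ∀ x ∈ l', ResRel ω (.nd l) x.2 (r x)) :
      ResRel ω (.nd l) (.pr l') ((l'.map (fun x => algebraMap ℝ (RF A) x.1 * r x)).sum)
  | sync (l l' : List (A × Proc A)) (r : A → RF A)
      (hω : ω ∉ l'.map Prod.fst)
      (h : ∀ a ∈ (l.map Prod.fst).toFinset ∩ (l'.map Prod.fst).toFinset,
        ∀ sa Ta, Proc.step (.nd l) a = some sa → Proc.step (.nd l') a = some Ta →
          ResRel ω sa Ta (r a)) :
      ResRel ω (.nd l) (.nd l')
        (∑ a ∈ (l.map Prod.fst).toFinset ∩ (l'.map Prod.fst).toFinset,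
          (RVar a / ∑ b ∈ (l.map Prod.fst).toFinset ∩ (l'.map Prod.fst).toFinset, RVar b) * r a)

/-- Testing equivalence `≈_T` : equal testing results for every test. -/
def TestEquiv (ω : A) (s t : Proc A) : Prop :=
  ∀ T : Proc A, WF T → ∀ r : RF A, (ResRel ω s T r ↔ ResRel ω t T r)

/-- Processes (as opposed to tests) never perform the success action ω. -/
inductive NoOmega (ω : A) : Proc A → Prop
  | nd (l : List (A × Proc A)) :
      ω ∉ l.map Prod.fst → (∀ x ∈ l, NoOmega ω x.2) → NoOmega ω (.nd l)
  | pr (l : List (ℝ × Proc A)) :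
      (∀ x ∈ l, NoOmega ω x.2) → NoOmega ω (.pr l)

/-- Processes with no probabilistic transitions at all. -/
inductive NoProb : Proc A → Prop
  | nd (l : List (A × Proc A)) : (∀ x ∈ l, NoProb x.2) → NoProb (.nd l)
section Aux
open Proc
variable {A : Type} [DecidableEq A]

lemma aux_sum_map_add {α R} [AddCommMonoid R] (l : List α) (f g : α → R) :
    (l.map fun x => f x + g x).sum = (l.map f).sum + (l.map g).sum := by
  induction l with
  | nil => simp
  | cons x l ih => simp only [List.map_cons, List.sum_cons, ih]; abel

lemma aux_swapLL {R} [CommRing R] {α β} (l : List α) (l' : List β)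
    (c : α → R) (d : β → R) (f : α → β → R) :
    (l.map fun x => c x * (l'.map fun y => d y * f x y).sum).sum
      = (l'.map fun y => d y * (l.map fun x => c x * f x y).sum).sum := by
  induction l with
  | nil => simp
  | cons x l ih =>
      simp only [List.map_cons, List.sum_cons, ih, mul_add, aux_sum_map_add]
      congr 1
      rw [← List.sum_map_mul_left]
      congr 1
      exact List.map_congr_left fun y _ => by ring

lemma aux_swapFL {R} [CommRing R] {α β} (S : Finset α) (l : List β)
    (c : α → R) (d : β → R) (f : α → β → R) :
    (∑ a ∈ S, c a * (l.map fun y => d y * f a y).sum)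
      = (l.map fun y => d y * ∑ a ∈ S, c a * f a y).sum := by
  induction l with
  | nil => simp
  | cons y l ih =>
      simp only [List.map_cons, List.sum_cons, ← ih, mul_add, Finset.sum_add_distrib]
      congr 1
      rw [Finset.mul_sum]
      exact Finset.sum_congr rfl fun a _ => by ring

lemma aux_group_sum {R} [AddCommMonoid R] {β} (l : List β) (m : β → Finset A)
    (Ms : Finset (Finset A)) (g : β → R) (h : ∀ x ∈ l, m x ∈ Ms) :
    (∑ M ∈ Ms, ((l.filter fun x => m x = M).map g).sum) = (l.map g).sum := by
  induction l with
  | nil => simp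
  | cons x l ih =>
      have hx := h x (by simp)
      have ih' := ih (fun y hy => h y (by simp [hy]))
      simp only [List.filter_cons, decide_eq_true_eq]
      have key : ∀ M ∈ Ms, (((if m x = M then x :: l.filter (fun y => m y = M)
          else l.filter (fun y => m y = M)).map g).sum)
          = (if m x = M then g x else 0) + ((l.filter (fun y => m y = M)).map g).sum := by
        intro M _; by_cases hM : m x = M <;> simp [hM]
      rw [Finset.sum_congr rfl key, Finset.sum_add_distrib, ih',
        Finset.sum_ite_eq Ms (m x) (fun _ => g x), if_pos hx]
      simp

lemma aux_filter_sum (l : List (ℝ × Proc A)) (p : ℝ × Proc A → Prop) [DecidablePred p] :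
    (l.map fun x => x.1 * (if p x then (1:ℝ) else 0)).sum
      = ((l.filter fun x => p x).map Prod.fst).sum := by
  induction l with
  | nil => simp
  | cons x l ih =>
      simp only [List.map_cons, List.sum_cons, List.filter_cons, decide_eq_true_eq]
      by_cases hx : p x
      · simp only [hx, if_true, List.map_cons, List.sum_cons, ih, mul_one]
      · simp only [hx, if_false, ih, mul_zero, zero_add]

lemma aux_flatMap_sum {α β R} [AddCommMonoid R] (l : List α) (f : α → List β) (g : β → R) :
    ((l.flatMap f).map g).sum = (l.map fun x => ((f x).map g).sum).sum := by
  induction l with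
  | nil => simp
  | cons x l ih => simp [List.flatMap_cons, ih]

lemma aux_le_one_of_mem (l : List ℝ) (h0 : ∀ x ∈ l, 0 ≤ x) (h1 : l.sum = 1) :
    ∀ x ∈ l, x ≤ 1 := fun x hx => h1 ▸ List.single_le_sum h0 x hx

lemma aux_attach_sum {α} (l : List α) (f : α → ℝ) :
    (l.attach.map fun x => f x.1).sum = (l.map f).sum := by
  have : (l.attach.map fun x => f x.1) = l.attach.map (f ∘ Subtype.val) := rfl
  rw [this, ← List.map_map, List.attach_map_subtype_val]

end Aux
section Aux2
open Proc
variable {A : Type} [DecidableEq A]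

lemma aux_sizeOf_pos (p : Proc A) : 0 < sizeOf p := by cases p <;> simp

lemma aux_sizeOf_snd_lt_nd {l : List (A × Proc A)} {y} (hy : y ∈ l) :
    sizeOf y.2 < sizeOf (Proc.nd l) := by
  have h := List.sizeOf_lt_of_mem hy
  obtain ⟨a, p⟩ := y
  simp at h ⊢; omega

lemma aux_sizeOf_snd_lt_pr {l : List (ℝ × Proc A)} {y} (hy : y ∈ l) :
    sizeOf y.2 < sizeOf (Proc.pr l) := by
  have h := List.sizeOf_lt_of_mem hy
  obtain ⟨a, p⟩ := y
  simp at h ⊢; omega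

lemma aux_step_mem {l : List (A × Proc A)} {a : A} {p : Proc A}
    (h : Proc.step (Proc.nd l) a = some p) : ∃ x ∈ l, x.1 = a ∧ x.2 = p := by
  simp only [Proc.step, Option.map_eq_some_iff] at h
  obtain ⟨x, hx, rfl⟩ := h
  exact ⟨x, List.mem_of_find?_eq_some hx, by simpa using List.find?_some hx, rfl⟩

lemma aux_step_isSome {l : List (A × Proc A)} {a : A}
    (h : a ∈ l.map Prod.fst) : ∃ p, Proc.step (Proc.nd l) a = some p := by
  simp only [Proc.step, Option.map_eq_some_iff]
  obtain ⟨x, hx, rfl⟩ := List.mem_map.mp h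
  have : (l.find? fun y => y.1 = x.1).isSome := by
    rw [List.find?_isSome]
    exact ⟨x, hx, by simp⟩
  obtain ⟨y, hy⟩ := Option.isSome_iff_exists.mp this
  exact ⟨y.2, y, hy, rfl⟩

lemma aux_step_mem_menu {l : List (A × Proc A)} {a : A} {p : Proc A}
    (h : Proc.step (Proc.nd l) a = some p) : a ∈ (l.map Prod.fst).toFinset := by
  obtain ⟨x, hx, rfl, rfl⟩ := aux_step_mem h
  simp only [List.mem_toFinset]
  exact List.mem_map.mpr ⟨x, hx, rfl⟩

lemma aux_sizeOf_step_lt {l : List (A × Proc A)} {a : A} {p : Proc A}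
    (h : Proc.step (Proc.nd l) a = some p) : sizeOf p < sizeOf (Proc.nd l) := by
  obtain ⟨x, hx, -, rfl⟩ := aux_step_mem h
  exact aux_sizeOf_snd_lt_nd hx

lemma aux_WF_nd_child {l : List (A × Proc A)} (h : WF (Proc.nd l)) :
    ∀ x ∈ l, WF x.2 := by cases h with | nd _ _ h2 => exact h2

lemma aux_WF_pr_child {l : List (ℝ × Proc A)} (h : WF (Proc.pr l)) :
    ∀ x ∈ l, WF x.2 ∧ 0 < x.1 ∧ (∃ l', x.2 = Proc.nd l') := by
  cases h with | pr _ h1 _ h3 => exact fun x hx => ⟨h3 x hx, (h1 x hx).1, (h1 x hx).2.2⟩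

lemma aux_WF_pr_sum {l : List (ℝ × Proc A)} (h : WF (Proc.pr l)) :
    (l.map Prod.fst).sum = 1 := by cases h with | pr _ _ h2 => exact h2

lemma aux_WF_step {l : List (A × Proc A)} (h : WF (Proc.nd l)) {a p}
    (hs : Proc.step (Proc.nd l) a = some p) : WF p := by
  obtain ⟨x, hx, -, rfl⟩ := aux_step_mem hs
  exact aux_WF_nd_child h x hx

-- ## P1 lemmas

lemma aux_P1_nd (l : List (A × Proc A)) (M : Finset A) :
    P1 (Proc.nd l) M = if (Proc.nd l).menu = M then 1 else 0 := by
  rw [P1]; rfl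

lemma aux_P1_pr (l : List (ℝ × Proc A)) (M : Finset A) :
    P1 (Proc.pr l) M = (l.map fun x => x.1 * P1 x.2 M).sum := by
  rw [P1]
  exact aux_attach_sum l (fun x => x.1 * P1 x.2 M)

lemma aux_P1_menu {s : Proc A} (hs : WF s) (M : Finset A) (hM : ∃ l', s = Proc.nd l') :
    P1 s M = if s.menu = M then 1 else 0 := by
  obtain ⟨l', rfl⟩ := hM; exact aux_P1_nd l' M

lemma aux_P1_filter {l : List (ℝ × Proc A)} (h : WF (Proc.pr l)) (M : Finset A) :
    P1 (Proc.pr l) M = ((l.filter fun x => x.2.menu = M).map Prod.fst).sum := by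
  rw [aux_P1_pr, ← aux_filter_sum l (fun x => x.2.menu = M)]
  congr 1
  refine List.map_congr_left fun x hx => ?_
  obtain ⟨hWF, -, hnd⟩ := aux_WF_pr_child h x hx
  rw [aux_P1_menu hWF M hnd]

lemma aux_P1_nonneg {s : Proc A} (hs : WF s) (M : Finset A) : 0 ≤ P1 s M := by
  cases s with
  | nd l => rw [aux_P1_nd]; split <;> norm_num
  | pr l =>
      rw [aux_P1_filter hs]
      refine List.sum_nonneg fun x hx => ?_
      obtain ⟨y, hy, rfl⟩ := List.mem_map.mp hx
      exact le_of_lt (aux_WF_pr_child hs y (List.mem_of_mem_filter hy)).2.1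

lemma aux_P1_pr_pos {l : List (ℝ × Proc A)} (h : WF (Proc.pr l)) (M : Finset A) :
    0 < P1 (Proc.pr l) M ↔ ∃ x ∈ l, x.2.menu = M := by
  constructor
  · intro hpos
    by_contra hne
    push_neg at hne
    rw [aux_P1_filter h, List.filter_eq_nil_iff.mpr (by simpa using hne)] at hpos
    simp at hpos
  · rintro ⟨x, hx, hm⟩
    rw [aux_P1_filter h]
    have hxf : x ∈ l.filter fun y => y.2.menu = M := List.mem_filter.mpr ⟨hx, by simp [hm]⟩
    have h1 : x.1 ∈ (l.filter fun y => y.2.menu = M).map Prod.fst :=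
      List.mem_map.mpr ⟨x, hxf, rfl⟩
    have hle := List.single_le_sum (l := (l.filter fun y => y.2.menu = M).map Prod.fst)
      (fun y hy => ?_) x.1 h1
    · exact lt_of_lt_of_le (aux_WF_pr_child h x hx).2.1 hle
    · obtain ⟨z, hz, rfl⟩ := List.mem_map.mp hy
      exact le_of_lt (aux_WF_pr_child h z (List.mem_of_mem_filter hz)).2.1

/-- The set of menus reachable in one step. -/
noncomputable def menusOf : Proc A → Finset (Finset A)
  | Proc.nd l => {(l.map Prod.fst).toFinset}
  | Proc.pr l => (l.map fun x => x.2.menu).toFinset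

lemma aux_P1_pos_mem {s : Proc A} (hs : WF s) {M : Finset A} (h : 0 < P1 s M) :
    M ∈ menusOf s := by
  cases s with
  | nd l =>
      rw [aux_P1_nd] at h
      simp only [menusOf]
      split at h
      · simpa [Proc.menu] using (by assumption : (Proc.nd l).menu = M).symm
      · norm_num at h
  | pr l =>
      obtain ⟨x, hx, hm⟩ := (aux_P1_pr_pos hs M).mp h
      simp only [menusOf, List.mem_toFinset]
      exact List.mem_map.mpr ⟨x, hx, hm⟩

end Aux2
section Aux3
open Proc
variable {A : Type} [DecidableEq A]

/-- The filtered branch list used in `after` on probabilistic states. -/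
def selOf (l : List (ℝ × Proc A)) (M : Finset A) : List (ℝ × Proc A) :=
  l.filter (fun x => x.2.menu = M)

/-- The entry list used in `after` on probabilistic states. -/
noncomputable def entriesOf (l : List (ℝ × Proc A)) (M : Finset A) (a : A) :
    List (ℝ × Proc A) :=
  (selOf l M).flatMap (fun x =>
    match x.2.step a with
    | none => []
    | some q => flat (x.1 / ((selOf l M).map Prod.fst).sum) q)

lemma aux_after_pr (l : List (ℝ × Proc A)) (M : Finset A) (a : A) :
    after (Proc.pr l) M a =
      if (entriesOf l M a).isEmpty then none else some (Proc.pr (entriesOf l M a)) := rfl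

lemma aux_mem_sel {l : List (ℝ × Proc A)} {M : Finset A} {x} :
    x ∈ selOf l M ↔ x ∈ l ∧ x.2.menu = M := by
  simp [selOf, List.mem_filter]

lemma aux_tot_eq {l : List (ℝ × Proc A)} (h : WF (Proc.pr l)) (M : Finset A) :
    ((selOf l M).map Prod.fst).sum = P1 (Proc.pr l) M := (aux_P1_filter h M).symm

lemma aux_step_some_mem_menu {s : Proc A} {a p} (h : Proc.step s a = some p) :
    a ∈ s.menu := by
  cases s with
  | nd l => exact aux_step_mem_menu h
  | pr l => simp [Proc.step] at h

lemma aux_step_menu_isSome {s : Proc A} {a} (h : a ∈ s.menu) :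
    ∃ p, Proc.step s a = some p := by
  cases s with
  | nd l => exact aux_step_isSome (by simpa [Proc.menu] using h)
  | pr l => simp [Proc.menu] at h

lemma aux_flat_ne_nil {q : Proc A} (hq : WF q) (c : ℝ) : flat c q ≠ [] := by
  cases q with
  | nd l => simp [flat]
  | pr l =>
      simp only [flat, ne_eq, List.map_eq_nil_iff]
      intro hl
      have := aux_WF_pr_sum hq
      rw [hl] at this
      simp at this

lemma aux_flat_mem {q : Proc A} (hq : WF q) {c : ℝ} (hc : 0 < c) {e : ℝ × Proc A}
    (he : e ∈ flat c q) : 0 < e.1 ∧ WF e.2 ∧ ∃ l', e.2 = Proc.nd l' := by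
  cases q with
  | nd l =>
      simp only [flat, List.mem_singleton] at he
      subst he
      exact ⟨hc, hq, l, rfl⟩
  | pr l =>
      simp only [flat, List.mem_map] at he
      obtain ⟨y, hy, rfl⟩ := he
      obtain ⟨hwf, hpos, hnd⟩ := aux_WF_pr_child hq y hy
      exact ⟨mul_pos hc hpos, hwf, hnd⟩

lemma aux_flat_fst_sum {q : Proc A} (hq : WF q) (c : ℝ) :
    ((flat c q).map Prod.fst).sum = c := by
  cases q with
  | nd l => simp [flat]
  | pr l =>
      simp only [flat, List.map_map]
      have : ((l.map fun x => c * x.1)).sum = c * (l.map Prod.fst).sum :=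
        List.sum_map_mul_left l Prod.fst c
      rw [show (Prod.fst ∘ fun x : ℝ × Proc A => (c * x.1, x.2)) = fun x : ℝ × Proc A => c * x.1 from rfl,
        this, aux_WF_pr_sum hq, mul_one]

lemma aux_after_some_imp {s : Proc A} (hs : WF s) {M a s'}
    (h : after s M a = some s') : 0 < P1 s M ∧ a ∈ M := by
  cases s with
  | nd l =>
      simp only [after] at h
      split at h
      · rename_i hmenu
        refine ⟨by rw [aux_P1_nd]; simp [Proc.menu, hmenu], ?_⟩
        have := aux_step_mem_menu h
        rw [hmenu] at this
        exact this
      · exact absurd h (by simp)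
  | pr l =>
      rw [aux_after_pr] at h
      split at h
      · exact absurd h (by simp)
      · rename_i hne
        rw [List.isEmpty_iff] at hne
        obtain ⟨e, he⟩ := List.exists_mem_of_ne_nil _ hne
        obtain ⟨x, hx, hfx⟩ := List.mem_flatMap.mp he
        rw [aux_mem_sel] at hx
        cases hq : x.2.step a with
        | none => rw [hq] at hfx; simp at hfx
        | some q =>
            have haM : a ∈ M := hx.2 ▸ aux_step_some_mem_menu hq
            exact ⟨(aux_P1_pr_pos hs M).mpr ⟨x, hx.1, hx.2⟩, haM⟩

lemma aux_after_pr_eq {l : List (ℝ × Proc A)} (h : WF (Proc.pr l)) {M a}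
    (hpos : 0 < P1 (Proc.pr l) M) (haM : a ∈ M) :
    after (Proc.pr l) M a = some (Proc.pr (entriesOf l M a)) := by
  rw [aux_after_pr]
  obtain ⟨x, hx, hm⟩ := (aux_P1_pr_pos h M).mp hpos
  have hxs : x ∈ selOf l M := aux_mem_sel.mpr ⟨hx, hm⟩
  obtain ⟨q, hq⟩ := aux_step_menu_isSome (s := x.2) (a := a) (hm ▸ haM)
  have hWFq : WF q := by
    obtain ⟨l2, hl2⟩ := (aux_WF_pr_child h x hx).2.2
    rw [hl2] at hq
    exact aux_WF_step (hl2 ▸ (aux_WF_pr_child h x hx).1) hq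
  have hfne : (match x.2.step a with
      | none => ([] : List (ℝ × Proc A))
      | some q => flat (x.1 / ((selOf l M).map Prod.fst).sum) q) ≠ [] := by
    rw [hq]
    exact aux_flat_ne_nil hWFq _
  obtain ⟨e, he⟩ := List.exists_mem_of_ne_nil _ hfne
  have : e ∈ entriesOf l M a := List.mem_flatMap.mpr ⟨x, hxs, he⟩
  rw [if_neg (by simpa [List.isEmpty_iff] using List.ne_nil_of_mem this)]

lemma aux_after_isSome {s : Proc A} (hs : WF s) {M a}
    (hpos : 0 < P1 s M) (haM : a ∈ M) : ∃ s', after s M a = some s' := by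
  cases s with
  | nd l =>
      rw [aux_P1_nd] at hpos
      have hmenu : (Proc.nd l).menu = M := by
        by_contra hne; rw [if_neg hne] at hpos; norm_num at hpos
      obtain ⟨p, hp⟩ := aux_step_menu_isSome (hmenu ▸ haM)
      refine ⟨p, ?_⟩
      simp only [after]
      rw [if_pos (by simpa [Proc.menu] using hmenu), hp]
  | pr l => exact ⟨_, aux_after_pr_eq hs hpos haM⟩

lemma aux_entries_char {l : List (ℝ × Proc A)} (h : WF (Proc.pr l)) {M : Finset A} {a : A}
    (hpos : 0 < P1 (Proc.pr l) M) (haM : a ∈ M) :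
    ∀ e ∈ entriesOf l M a, ∃ x ∈ selOf l M, ∃ q, x.2.step a = some q ∧ WF q ∧
      e ∈ flat (x.1 / P1 (Proc.pr l) M) q := by
  intro e he
  obtain ⟨x, hx, hfx⟩ := List.mem_flatMap.mp he
  cases hq : x.2.step a with
  | none => rw [hq] at hfx; simp at hfx
  | some q =>
      rw [hq] at hfx
      have hx' := aux_mem_sel.mp hx
      have hWFq : WF q := by
        obtain ⟨l2, hl2⟩ := (aux_WF_pr_child h x hx'.1).2.2
        exact aux_WF_step (hl2 ▸ (aux_WF_pr_child h x hx'.1).1) (hl2 ▸ hq)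
      exact ⟨x, hx, q, hq, hWFq, by rwa [aux_tot_eq h] at hfx⟩

lemma aux_entries_sum {l : List (ℝ × Proc A)} (h : WF (Proc.pr l)) {M : Finset A} {a : A}
    (hpos : 0 < P1 (Proc.pr l) M) (haM : a ∈ M) :
    ((entriesOf l M a).map Prod.fst).sum = 1 := by
  rw [entriesOf, aux_flatMap_sum]
  have step1 : ∀ x ∈ selOf l M, ((match x.2.step a with
      | none => ([] : List (ℝ × Proc A))
      | some q => flat (x.1 / ((selOf l M).map Prod.fst).sum) q).map Prod.fst).sum
      = x.1 / ((selOf l M).map Prod.fst).sum := by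
    intro x hx
    have hx' := aux_mem_sel.mp hx
    obtain ⟨q, hq⟩ := aux_step_menu_isSome (s := x.2) (a := a) (hx'.2 ▸ haM)
    have hWFq : WF q := by
      obtain ⟨l2, hl2⟩ := (aux_WF_pr_child h x hx'.1).2.2
      exact aux_WF_step (hl2 ▸ (aux_WF_pr_child h x hx'.1).1) (hl2 ▸ hq)
    rw [hq, aux_flat_fst_sum hWFq]
  rw [List.map_congr_left step1]
  have : ((selOf l M).map fun x => x.1 / ((selOf l M).map Prod.fst).sum).sum
      = ((selOf l M).map Prod.fst).sum / ((selOf l M).map Prod.fst).sum := by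
    simp only [div_eq_mul_inv]
    exact List.sum_map_mul_right _ _ _
  rw [this, aux_tot_eq h, div_self (ne_of_gt hpos)]

lemma aux_WF_after {s : Proc A} (hs : WF s) {M a s'}
    (h : after s M a = some s') : WF s' := by
  cases s with
  | nd l =>
      simp only [after] at h
      split at h
      · exact aux_WF_step hs h
      · exact absurd h (by simp)
  | pr l =>
      obtain ⟨hpos, haM⟩ := aux_after_some_imp hs h
      rw [aux_after_pr_eq hs hpos haM] at h
      obtain rfl : s' = Proc.pr (entriesOf l M a) := (Option.some.inj h).symm
      have hchar := aux_entries_char hs hpos haM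
      have hsum := aux_entries_sum hs hpos haM
      have hmem : ∀ e ∈ entriesOf l M a, 0 < e.1 ∧ WF e.2 ∧ ∃ l', e.2 = Proc.nd l' := by
        intro e he
        obtain ⟨x, hx, q, hq, hWFq, hef⟩ := hchar e he
        have hx' := aux_mem_sel.mp hx
        have hcpos : 0 < x.1 / P1 (Proc.pr l) M :=
          div_pos (aux_WF_pr_child hs x hx'.1).2.1 hpos
        exact aux_flat_mem hWFq hcpos hef
      refine WF.pr _ (fun e he => ⟨(hmem e he).1, ?_, (hmem e he).2.2⟩) hsum
        (fun e he => (hmem e he).2.1)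
      have : e.1 ∈ (entriesOf l M a).map Prod.fst := List.mem_map.mpr ⟨e, he, rfl⟩
      refine aux_le_one_of_mem _ (fun y hy => ?_) hsum e.1 this
      obtain ⟨z, hz, rfl⟩ := List.mem_map.mp hy
      exact le_of_lt (hmem z hz).1

end Aux3
section Aux4
open Proc
variable {A : Type} [DecidableEq A]

lemma aux_RT_P1 {s t : Proc A} (h : RTEquiv s t) (M : Finset A) : P1 s M = P1 t M := by
  have := h [] M
  simpa [Pn] using this

lemma aux_RT_symm {s t : Proc A} (h : RTEquiv s t) : RTEquiv t s :=
  fun tr M => (h tr M).symm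

lemma aux_RT_after {s t : Proc A} (h : RTEquiv s t) (hs : WF s) {M a s' t'}
    (h1 : after s M a = some s') (h2 : after t M a = some t') : RTEquiv s' t' := by
  intro tr M'
  have hpos : 0 < P1 s M := (aux_after_some_imp hs h1).1
  have h3 := h (⟨M, a⟩ :: tr) M'
  rw [Pn, Pn, if_pos hpos, if_pos (aux_RT_P1 h M ▸ hpos), h1, h2] at h3
  simpa using h3

lemma aux_step_eq_of_eq {l : List (A × Proc A)} {a : A} {p p' : Proc A}
    (h : Proc.step (Proc.nd l) a = some p) (h' : Proc.step (Proc.nd l) a = some p') :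
    p = p' := by rw [h] at h'; exact Option.some.inj h'

/-- Uniqueness of testing results. -/
lemma ResRel_unique {ω : A} {s T : Proc A} {r : RF A} (h : ResRel ω s T r) :
    ∀ r', ResRel ω s T r' → r = r' := by
  induction h with
  | success s l hm =>
      intro r' h'
      cases h' with
      | success => rfl
      | probL _ _ _ hT _ => exact absurd hm hT
      | sync _ _ _ hω _ => exact absurd hm hω
  | probL l T r hT h ih =>
      intro r' h'
      cases h' with
      | success _ _ hm => exact absurd hm hT
      | probL _ _ r2 _ h2 =>
          congr 1
          exact List.map_congr_left fun x hx => by rw [ih x hx (r2 x) (h2 x hx)]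
  | probR l l' r h ih =>
      intro r' h'
      cases h' with
      | probR _ _ r2 h2 =>
          congr 1
          exact List.map_congr_left fun x hx => by rw [ih x hx (r2 x) (h2 x hx)]
  | sync l l' r hω h ih =>
      intro r' h'
      cases h' with
      | success _ _ hm => exact absurd hm hω
      | sync _ _ r2 _ h2 =>
          refine Finset.sum_congr rfl fun a ha => ?_
          have haK := Finset.mem_inter.mp ha
          obtain ⟨sa, hsa⟩ := aux_step_isSome (List.mem_toFinset.mp haK.1)
          obtain ⟨Ta, hTa⟩ := aux_step_isSome (List.mem_toFinset.mp haK.2)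
          rw [ih a ha sa Ta hsa hTa (r2 a) (h2 a ha sa Ta hsa hTa)]

/-- Existence of testing results. -/
lemma ResRel_exists {ω : A} : ∀ (n : ℕ) (s T : Proc A), sizeOf s + sizeOf T ≤ n →
    ∃ r, ResRel ω s T r := by
  intro n
  induction n with
  | zero =>
      intro s T hle
      have := aux_sizeOf_pos s; have := aux_sizeOf_pos T; omega
  | succ n ih =>
      intro s T hle
      by_cases hω : Proc.hasOmega ω T
      · obtain ⟨l', hl'⟩ : ∃ l', T = Proc.nd l' := by
          cases T with
          | nd l' => exact ⟨l', rfl⟩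
          | pr l' => exact absurd hω (by simp [Proc.hasOmega])
        subst hl'
        exact ⟨1, ResRel.success s l' hω⟩
      · cases s with
        | pr l =>
            have hch : ∀ x : ℝ × Proc A, ∃ v : RF A, x ∈ l → ResRel ω x.2 T v := by
              intro x
              by_cases hx : x ∈ l
              · obtain ⟨v, hv⟩ := ih x.2 T (by
                  have := aux_sizeOf_snd_lt_pr (l := l) hx; omega)
                exact ⟨v, fun _ => hv⟩
              · exact ⟨0, fun h => absurd h hx⟩
            choose v hv using hch
            exact ⟨_, ResRel.probL l T v hω (fun x hx => hv x hx)⟩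
        | nd l =>
            cases T with
            | pr l' =>
                have hch : ∀ y : ℝ × Proc A, ∃ v : RF A, y ∈ l' → ResRel ω (Proc.nd l) y.2 v := by
                  intro y
                  by_cases hy : y ∈ l'
                  · obtain ⟨v, hv⟩ := ih (Proc.nd l) y.2 (by
                      have := aux_sizeOf_snd_lt_pr (l := l') hy; omega)
                    exact ⟨v, fun _ => hv⟩
                  · exact ⟨0, fun h => absurd h hy⟩
                choose v hv using hch
                exact ⟨_, ResRel.probR l l' v (fun y hy => hv y hy)⟩
            | nd l' =>
                have hch : ∀ a : A, ∃ v : RF A, ∀ sa Ta,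
                    Proc.step (Proc.nd l) a = some sa → Proc.step (Proc.nd l') a = some Ta →
                    ResRel ω sa Ta v := by
                  intro a
                  cases hsa : Proc.step (Proc.nd l) a with
                  | none => exact ⟨0, fun sa Ta h1 _ => nomatch h1⟩
                  | some sa =>
                      cases hTa : Proc.step (Proc.nd l') a with
                      | none => exact ⟨0, fun sa' Ta _ h2 => nomatch h2⟩
                      | some Ta =>
                          obtain ⟨v, hv⟩ := ih sa Ta (by
                            have := aux_sizeOf_step_lt hsa
                            have := aux_sizeOf_step_lt hTa
                            omega)
                          refine ⟨v, fun sa' Ta' h1 h2 => ?_⟩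
                          obtain rfl := Option.some.inj h1
                          obtain rfl := Option.some.inj h2
                          exact hv
                choose v hv using hch
                refine ⟨_, ResRel.sync l l' v (by simpa [Proc.hasOmega] using hω)
                  (fun a _ sa Ta h1 h2 => hv a sa Ta h1 h2)⟩

end Aux4
section Aux5
open Proc
variable {A : Type} [DecidableEq A] {ω : A}

lemma aux_sum_alg (l : List (ℝ × Proc A)) (c : RF A) :
    (l.map fun x => algebraMap ℝ (RF A) x.1 * c).sum
      = algebraMap ℝ (RF A) ((l.map Prod.fst).sum) * c := by
  rw [List.sum_map_mul_right l (fun x => algebraMap ℝ (RF A) x.1) c]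
  congr 1
  rw [show (l.map fun x => algebraMap ℝ (RF A) x.1)
      = (l.map Prod.fst).map (algebraMap ℝ (RF A)) by rw [List.map_map]; rfl]
  exact (map_list_sum (algebraMap ℝ (RF A)) (l.map Prod.fst)).symm

lemma aux_res_omega {s : Proc A} {l' : List (A × Proc A)} (hm : ω ∈ l'.map Prod.fst)
    {r} (h : ResRel ω s (Proc.nd l') r) : r = 1 := by
  cases h with
  | success => rfl
  | probL _ _ _ hT _ => exact absurd hm hT
  | sync _ _ _ hω _ => exact absurd hm hω

lemma aux_mix_inv {l : List (ℝ × Proc A)} (hw : WF (Proc.pr l)) {T : Proc A} {r}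
    (h : ResRel ω (Proc.pr l) T r) :
    ∃ w : ℝ × Proc A → RF A, (∀ x ∈ l, ResRel ω x.2 T (w x)) ∧
      r = (l.map fun x => algebraMap ℝ (RF A) x.1 * w x).sum := by
  cases h with
  | probL _ _ w _ h2 => exact ⟨w, h2, rfl⟩
  | success _ l₂ hm =>
      refine ⟨fun _ => 1, fun x _ => ResRel.success x.2 l₂ hm, ?_⟩
      rw [aux_sum_alg, aux_WF_pr_sum hw, map_one, one_mul]

lemma aux_sync_inv {l₀ l' : List (A × Proc A)} (hω : ω ∉ l'.map Prod.fst) {r}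
    (h : ResRel ω (Proc.nd l₀) (Proc.nd l') r) :
    ∃ w : A → RF A,
      (∀ a ∈ (Proc.nd l₀).menu ∩ (l'.map Prod.fst).toFinset, ∀ sa Ta,
        Proc.step (Proc.nd l₀) a = some sa → Proc.step (Proc.nd l') a = some Ta →
        ResRel ω sa Ta (w a)) ∧
      r = ∑ a ∈ (Proc.nd l₀).menu ∩ (l'.map Prod.fst).toFinset,
        (RVar a / ∑ b ∈ (Proc.nd l₀).menu ∩ (l'.map Prod.fst).toFinset, RVar b) * w a := by
  cases h with
  | success _ _ hm => exact absurd hm hω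
  | sync _ _ w _ h2 => exact ⟨w, h2, rfl⟩

lemma aux_probR_inv {l : List (A × Proc A)} {l' : List (ℝ × Proc A)} {r}
    (h : ResRel ω (Proc.nd l) (Proc.pr l') r) :
    ∃ v : ℝ × Proc A → RF A, (∀ y ∈ l', ResRel ω (Proc.nd l) y.2 (v y)) ∧
      r = (l'.map fun y => algebraMap ℝ (RF A) y.1 * v y).sum := by
  cases h with | probR _ _ v h2 => exact ⟨v, h2, rfl⟩

lemma aux_Rinv {s : Proc A} (hs : WF s) {l' : List (ℝ × Proc A)} {r}
    (h : ResRel ω s (Proc.pr l') r) :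
    ∃ v : ℝ × Proc A → RF A, (∀ y ∈ l', ResRel ω s y.2 (v y)) ∧
      r = (l'.map fun y => algebraMap ℝ (RF A) y.1 * v y).sum := by
  cases s with
  | nd l => exact aux_probR_inv h
  | pr l =>
      obtain ⟨w, hw, rfl⟩ := aux_mix_inv hs h
      have hch : ∀ x : ℝ × Proc A, ∃ V : ℝ × Proc A → RF A, x ∈ l →
          ((∀ y ∈ l', ResRel ω x.2 y.2 (V y)) ∧
            w x = (l'.map fun y => algebraMap ℝ (RF A) y.1 * V y).sum) := by
        intro x
        by_cases hx : x ∈ l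
        · obtain ⟨l₀, hl₀⟩ := (aux_WF_pr_child hs x hx).2.2
          have hwx := hw x hx
          rw [hl₀] at hwx
          obtain ⟨V, hV1, hV2⟩ := aux_probR_inv hwx
          exact ⟨V, fun _ => ⟨fun y hy => hl₀ ▸ hV1 y hy, hV2⟩⟩
        · exact ⟨fun _ => 0, fun h => absurd h hx⟩
      choose V hV using hch
      refine ⟨fun y => (l.map fun x => algebraMap ℝ (RF A) x.1 * V x y).sum,
        fun y hy => ?_, ?_⟩
      · show ResRel ω (Proc.pr l) y.2
          ((l.map fun x => algebraMap ℝ (RF A) x.1 * V x y).sum)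
        by_cases hΩ : Proc.hasOmega ω y.2
        · obtain ⟨m, hm⟩ : ∃ m, y.2 = Proc.nd m := by
            cases hy2 : y.2 with
            | nd m => exact ⟨m, rfl⟩
            | pr m => rw [hy2] at hΩ; exact absurd hΩ (by simp [Proc.hasOmega])
          rw [hm] at hΩ
          have hone : ∀ x ∈ l, algebraMap ℝ (RF A) x.1 * V x y
              = algebraMap ℝ (RF A) x.1 * 1 := by
            intro x hx
            have h1 := (hV x hx).1 y hy
            rw [hm] at h1
            rw [aux_res_omega hΩ h1]
          rw [hm, List.map_congr_left hone, aux_sum_alg, aux_WF_pr_sum hs, map_one, one_mul]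
          exact ResRel.success _ m hΩ
        · exact ResRel.probL l y.2 (fun x => V x y) hΩ (fun x hx => (hV x hx).1 y hy)
      · have hrw : ∀ x ∈ l, algebraMap ℝ (RF A) x.1 * w x
            = algebraMap ℝ (RF A) x.1 *
              (l'.map fun y => algebraMap ℝ (RF A) y.1 * V x y).sum :=
          fun x hx => by rw [(hV x hx).2]
        rw [List.map_congr_left hrw]
        exact aux_swapLL l l' _ _ (fun x y => V x y)

lemma aux_Rcon {t : Proc A} (ht : WF t) {l' : List (ℝ × Proc A)} (v : ℝ × Proc A → RF A)
    (hv : ∀ y ∈ l', ResRel ω t y.2 (v y)) :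
    ResRel ω t (Proc.pr l') ((l'.map fun y => algebraMap ℝ (RF A) y.1 * v y).sum) := by
  cases t with
  | nd l => exact ResRel.probR l l' v hv
  | pr m =>
      have hch : ∀ y : ℝ × Proc A, ∃ W : ℝ × Proc A → RF A, y ∈ l' →
          ((∀ x ∈ m, ResRel ω x.2 y.2 (W x)) ∧
            v y = (m.map fun x => algebraMap ℝ (RF A) x.1 * W x).sum) := by
        intro y
        by_cases hy : y ∈ l'
        · obtain ⟨W, hW1, hW2⟩ := aux_mix_inv ht (hv y hy)
          exact ⟨W, fun _ => ⟨hW1, hW2⟩⟩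
        · exact ⟨fun _ => 0, fun h => absurd h hy⟩
      choose W hW using hch
      have key : (l'.map fun y => algebraMap ℝ (RF A) y.1 * v y).sum
          = (m.map fun x => algebraMap ℝ (RF A) x.1 *
              (l'.map fun y => algebraMap ℝ (RF A) y.1 * W y x).sum).sum := by
        have hrw : ∀ y ∈ l', algebraMap ℝ (RF A) y.1 * v y
            = algebraMap ℝ (RF A) y.1 *
              (m.map fun x => algebraMap ℝ (RF A) x.1 * W y x).sum :=
          fun y hy => by rw [(hW y hy).2]
        rw [List.map_congr_left hrw]
        exact (aux_swapLL m l' _ _ fun x y => W y x).symm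
      rw [key]
      refine ResRel.probL m (Proc.pr l') _ (by simp [Proc.hasOmega]) fun x hx => ?_
      obtain ⟨l₀, hl₀⟩ := (aux_WF_pr_child ht x hx).2.2
      rw [hl₀]
      exact ResRel.probR l₀ l' (fun y => W y x) fun y hy => hl₀ ▸ (hW y hy).1 x hx

end Aux5
section Aux6
open Proc
variable {A : Type} [DecidableEq A] {ω : A}

lemma aux_canonical {s : Proc A} (hs : WF s) {l' : List (A × Proc A)}
    (hω : ω ∉ l'.map Prod.fst)
    (Ms : Finset (Finset A)) (hMs : ∀ M, 0 < P1 s M → M ∈ Ms)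
    (w : Finset A → A → RF A)
    (hw : ∀ M ∈ Ms, ∀ a ∈ M, ∀ s' Ta, after s M a = some s' →
      Proc.step (Proc.nd l') a = some Ta → ResRel ω s' Ta (w M a))
    {r} (h : ResRel ω s (Proc.nd l') r) :
    r = ∑ M ∈ Ms, algebraMap ℝ (RF A) (P1 s M) *
        ∑ a ∈ M ∩ (l'.map Prod.fst).toFinset,
          (RVar a / ∑ b ∈ M ∩ (l'.map Prod.fst).toFinset, RVar b) * w M a := by
  cases s with
  | nd l =>
      obtain ⟨ρ, hρ1, rfl⟩ := aux_sync_inv hω h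
      have hpos : 0 < P1 (Proc.nd l) ((Proc.nd l).menu) := by
        rw [aux_P1_nd, if_pos rfl]; norm_num
      have hmem := hMs _ hpos
      have hite : ∀ M ∈ Ms, algebraMap ℝ (RF A) (P1 (Proc.nd l) M) *
          (∑ a ∈ M ∩ (l'.map Prod.fst).toFinset,
            (RVar a / ∑ b ∈ M ∩ (l'.map Prod.fst).toFinset, RVar b) * w M a)
          = if (Proc.nd l).menu = M then
              (∑ a ∈ M ∩ (l'.map Prod.fst).toFinset,
                (RVar a / ∑ b ∈ M ∩ (l'.map Prod.fst).toFinset, RVar b) * w M a) else 0 := by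
        intro M _
        rw [aux_P1_nd]
        split <;> simp
      rw [Finset.sum_congr rfl hite, Finset.sum_ite_eq Ms ((Proc.nd l).menu) _, if_pos hmem]
      refine Finset.sum_congr rfl fun a ha => ?_
      obtain ⟨haM, haK⟩ := Finset.mem_inter.mp ha
      obtain ⟨sa, hsa⟩ := aux_step_menu_isSome haM
      obtain ⟨Ta, hTa⟩ := aux_step_isSome (List.mem_toFinset.mp haK)
      have hafter : after (Proc.nd l) ((Proc.nd l).menu) a = some sa := by
        simp only [after, Proc.menu]
        simpa using hsa
      have h1 := hρ1 a ha sa Ta hsa hTa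
      have h2 := hw _ hmem a haM sa Ta hafter hTa
      rw [ResRel_unique h1 _ h2]
  | pr l =>
      obtain ⟨ρ, hρ, rfl⟩ := aux_mix_inv hs h
      have hch : ∀ x : ℝ × Proc A, ∃ P : A → RF A, x ∈ l →
          ((∀ a ∈ x.2.menu ∩ (l'.map Prod.fst).toFinset, ∀ sa Ta,
              x.2.step a = some sa → Proc.step (Proc.nd l') a = some Ta →
              ResRel ω sa Ta (P a)) ∧
            ρ x = ∑ a ∈ x.2.menu ∩ (l'.map Prod.fst).toFinset,
              (RVar a / ∑ b ∈ x.2.menu ∩ (l'.map Prod.fst).toFinset, RVar b) * P a) := by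
        intro x
        by_cases hx : x ∈ l
        · obtain ⟨l₀, hl₀⟩ := (aux_WF_pr_child hs x hx).2.2
          have h' := hρ x hx
          rw [hl₀] at h'
          obtain ⟨P, hP1, hP2⟩ := aux_sync_inv hω h'
          refine ⟨P, fun _ => ⟨?_, ?_⟩⟩
          · rw [hl₀]; exact hP1
          · rw [hl₀]; exact hP2
        · exact ⟨fun _ => 0, fun h => absurd h hx⟩
      choose P hP using hch
      have key : ∀ M ∈ Ms, algebraMap ℝ (RF A) (P1 (Proc.pr l) M) *
          (∑ a ∈ M ∩ (l'.map Prod.fst).toFinset,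
            (RVar a / ∑ b ∈ M ∩ (l'.map Prod.fst).toFinset, RVar b) * w M a)
          = ((selOf l M).map fun x => algebraMap ℝ (RF A) x.1 * ρ x).sum := by
        intro M hM
        by_cases hP0 : P1 (Proc.pr l) M = 0
        · have hsel : selOf l M = [] := by
            refine List.filter_eq_nil_iff.mpr fun x hx => ?_
            simp only [decide_eq_true_eq]
            intro hmenu
            have := (aux_P1_pr_pos hs M).mpr ⟨x, hx, hmenu⟩
            linarith
          rw [hP0, map_zero, zero_mul, hsel]
          simp
        · have hpos : 0 < P1 (Proc.pr l) M :=
            lt_of_le_of_ne (aux_P1_nonneg hs M) (Ne.symm hP0)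
          have key_a : ∀ a ∈ M ∩ (l'.map Prod.fst).toFinset, w M a
              = ((selOf l M).map fun x =>
                  algebraMap ℝ (RF A) (x.1 / P1 (Proc.pr l) M) * P x a).sum := by
            intro a ha
            obtain ⟨haM, haK⟩ := Finset.mem_inter.mp ha
            have hafter := aux_after_pr_eq hs hpos haM
            obtain ⟨Ta, hTa⟩ := aux_step_isSome (List.mem_toFinset.mp haK)
            have hwa := hw M hM a haM _ Ta hafter hTa
            have hWFe : WF (Proc.pr (entriesOf l M a)) := aux_WF_after hs hafter
            obtain ⟨σ, hσ, hsum⟩ := aux_mix_inv hWFe hwa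
            rw [hsum, entriesOf, aux_flatMap_sum]
            have hpt : ∀ x ∈ selOf l M,
                ((match x.2.step a with
                  | none => ([] : List (ℝ × Proc A))
                  | some q => flat (x.1 / ((selOf l M).map Prod.fst).sum) q).map
                    (fun e : ℝ × Proc A => algebraMap ℝ (RF A) e.1 * σ e)).sum
                = algebraMap ℝ (RF A) (x.1 / P1 (Proc.pr l) M) * P x a := by
              intro x hxsel
              have hx' := aux_mem_sel.mp hxsel
              obtain ⟨q, hq⟩ := aux_step_menu_isSome
                (show a ∈ x.2.menu by rw [hx'.2]; exact haM)
              simp only [hq]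
              rw [aux_tot_eq hs]
              have hWFq : WF q := by
                obtain ⟨l₂, hl₂⟩ := (aux_WF_pr_child hs x hx'.1).2.2
                exact aux_WF_step (hl₂ ▸ (aux_WF_pr_child hs x hx'.1).1) (hl₂ ▸ hq)
              have hPxa : ResRel ω q Ta (P x a) :=
                (hP x hx'.1).1 a
                  (Finset.mem_inter.mpr ⟨by rw [hx'.2]; exact haM, haK⟩) q Ta hq hTa
              have hσe : ∀ e ∈ flat (x.1 / P1 (Proc.pr l) M) q,
                  ResRel ω e.2 Ta (σ e) := by
                intro e he
                refine hσ e (List.mem_flatMap.mpr ⟨x, hxsel, ?_⟩)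
                simp only [hq]
                rwa [aux_tot_eq hs]
              cases q with
              | nd m =>
                  have hfl : flat (x.1 / P1 (Proc.pr l) M) (Proc.nd m)
                      = [(x.1 / P1 (Proc.pr l) M, Proc.nd m)] := rfl
                  rw [hfl]
                  simp only [List.map_cons, List.map_nil, List.sum_cons, List.sum_nil, add_zero]
                  congr 1
                  exact ResRel_unique (hσe _ (by rw [hfl]; exact List.mem_singleton.mpr rfl))
                    _ hPxa
              | pr m =>
                  obtain ⟨τ, hτ, hPeq⟩ := aux_mix_inv hWFq hPxa
                  have hfl : flat (x.1 / P1 (Proc.pr l) M) (Proc.pr m)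
                      = m.map fun y => ((x.1 / P1 (Proc.pr l) M) * y.1, y.2) := rfl
                  rw [hfl, List.map_map, hPeq,
                    ← List.sum_map_mul_left m (fun y => algebraMap ℝ (RF A) y.1 * τ y)]
                  refine congrArg List.sum (List.map_congr_left fun y hy => ?_)
                  show algebraMap ℝ (RF A) ((x.1 / P1 (Proc.pr l) M) * y.1) *
                      σ ((x.1 / P1 (Proc.pr l) M) * y.1, y.2)
                    = algebraMap ℝ (RF A) (x.1 / P1 (Proc.pr l) M) *
                      (algebraMap ℝ (RF A) y.1 * τ y)
                  rw [map_mul, mul_assoc]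
                  congr 1
                  congr 1
                  refine ResRel_unique (hσe _ ?_) _ (hτ y hy)
                  rw [hfl]
                  exact List.mem_map.mpr ⟨y, hy, rfl⟩
            exact congrArg List.sum (List.map_congr_left hpt)
          have hP0' : P1 (Proc.pr l) M ≠ 0 := ne_of_gt hpos
          calc algebraMap ℝ (RF A) (P1 (Proc.pr l) M) *
              (∑ a ∈ M ∩ (l'.map Prod.fst).toFinset,
                (RVar a / ∑ b ∈ M ∩ (l'.map Prod.fst).toFinset, RVar b) * w M a)
              = ∑ a ∈ M ∩ (l'.map Prod.fst).toFinset,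
                  (RVar a / ∑ b ∈ M ∩ (l'.map Prod.fst).toFinset, RVar b) *
                  ((selOf l M).map fun x =>
                    algebraMap ℝ (RF A) x.1 * P x a).sum := by
                rw [Finset.mul_sum]
                refine Finset.sum_congr rfl fun a ha => ?_
                have hptx : ∀ x ∈ selOf l M,
                    algebraMap ℝ (RF A) (P1 (Proc.pr l) M) *
                      (algebraMap ℝ (RF A) (x.1 / P1 (Proc.pr l) M) * P x a)
                    = algebraMap ℝ (RF A) x.1 * P x a := by
                  intro x _
                  rw [← mul_assoc, ← map_mul, mul_comm (P1 (Proc.pr l) M),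
                    div_mul_cancel₀ x.1 hP0']
                rw [key_a a ha, mul_left_comm]
                congr 1
                rw [← List.sum_map_mul_left (selOf l M)
                  (fun x => algebraMap ℝ (RF A) (x.1 / P1 (Proc.pr l) M) * P x a)
                  (algebraMap ℝ (RF A) (P1 (Proc.pr l) M))]
                exact congrArg List.sum (List.map_congr_left hptx)
            _ = ((selOf l M).map fun x => algebraMap ℝ (RF A) x.1 *
                  ∑ a ∈ M ∩ (l'.map Prod.fst).toFinset,
                    (RVar a / ∑ b ∈ M ∩ (l'.map Prod.fst).toFinset, RVar b) * P x a).sum :=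
                aux_swapFL _ _ _ _ _
            _ = ((selOf l M).map fun x => algebraMap ℝ (RF A) x.1 * ρ x).sum := by
                refine congrArg List.sum (List.map_congr_left fun x hxsel => ?_)
                have hx' := aux_mem_sel.mp hxsel
                have h2 := (hP x hx'.1).2
                rw [hx'.2] at h2
                rw [← h2]
      rw [Finset.sum_congr rfl key]
      exact (aux_group_sum l (fun x => x.2.menu) Ms
        (fun x => algebraMap ℝ (RF A) x.1 * ρ x)
        (fun x hx => hMs _ ((aux_P1_pr_pos hs _).mpr ⟨x, hx, rfl⟩))).symm

end Aux6
section Aux7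
open Proc
variable {A : Type} [DecidableEq A] {ω : A}

lemma aux_transfer : ∀ (n : ℕ) (T : Proc A), sizeOf T ≤ n → WF T →
    ∀ s t : Proc A, WF s → WF t → RTEquiv s t → ∀ r, ResRel ω s T r → ResRel ω t T r := by
  intro n
  induction n with
  | zero => intro T h; have := aux_sizeOf_pos T; omega
  | succ n ih =>
      intro T hle hT s t hs ht hst r hr
      cases T with
      | pr l' =>
          obtain ⟨v, hv, rfl⟩ := aux_Rinv hs hr
          refine aux_Rcon ht v fun y hy => ?_
          have hsz := aux_sizeOf_snd_lt_pr (l := l') hy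
          exact ih y.2 (by omega) (aux_WF_pr_child hT y hy).1 s t hs ht hst (v y) (hv y hy)
      | nd l' =>
          by_cases hΩ : ω ∈ l'.map Prod.fst
          · rw [aux_res_omega hΩ hr]
            exact ResRel.success t l' hΩ
          · have hch : ∀ (M : Finset A) (a : A), ∃ v : RF A,
                (∀ s' Ta, after s M a = some s' → Proc.step (Proc.nd l') a = some Ta →
                  ResRel ω s' Ta v) ∧
                (∀ t' Ta, after t M a = some t' → Proc.step (Proc.nd l') a = some Ta →
                  ResRel ω t' Ta v) := by
              intro M a
              cases hA : after s M a with
              | none =>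
                  refine ⟨0, ?_, ?_⟩
                  · intro s' Ta h1 _
                    exact absurd h1 (by simp)
                  · intro t' Ta h2 _
                    exfalso
                    obtain ⟨hpos, haM⟩ := aux_after_some_imp ht h2
                    rw [← aux_RT_P1 hst M] at hpos
                    obtain ⟨s', hs'⟩ := aux_after_isSome hs hpos haM
                    rw [hA] at hs'
                    exact absurd hs' (by simp)
              | some s' =>
                  obtain ⟨hpos, haM⟩ := aux_after_some_imp hs hA
                  obtain ⟨t', hB⟩ := aux_after_isSome ht (aux_RT_P1 hst M ▸ hpos) haM
                  cases hstep : Proc.step (Proc.nd l') a with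
                  | none =>
                      refine ⟨0, ?_, ?_⟩
                      · intro _ _ _ h2
                        exact absurd h2 (by simp)
                      · intro _ _ _ h2
                        exact absurd h2 (by simp)
                  | some Ta =>
                      obtain ⟨v, hv⟩ := ResRel_exists (ω := ω)
                        (sizeOf s' + sizeOf Ta) s' Ta le_rfl
                      have hsz := aux_sizeOf_step_lt hstep
                      have hv' : ResRel ω t' Ta v :=
                        ih Ta (by omega) (aux_WF_step hT hstep) s' t'
                          (aux_WF_after hs hA) (aux_WF_after ht hB)
                          (aux_RT_after hst hs hA hB) v hv
                      refine ⟨v, ?_, ?_⟩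
                      · intro s'' Ta' h1 h2
                        obtain rfl := Option.some.inj h1
                        obtain rfl := Option.some.inj h2
                        exact hv
                      · intro t'' Ta' h1 h2
                        rw [hB] at h1
                        obtain rfl := Option.some.inj h1
                        obtain rfl := Option.some.inj h2
                        exact hv'
            choose w hw using hch
            have hMs_s : ∀ M, 0 < P1 s M → M ∈ menusOf s ∪ menusOf t :=
              fun M h => Finset.mem_union_left _ (aux_P1_pos_mem hs h)
            have hMs_t : ∀ M, 0 < P1 t M → M ∈ menusOf s ∪ menusOf t :=
              fun M h => Finset.mem_union_right _ (aux_P1_pos_mem ht h)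
            have hcs := aux_canonical hs hΩ (menusOf s ∪ menusOf t) hMs_s w
              (fun M _ a _ s' Ta h1 h2 => (hw M a).1 s' Ta h1 h2) hr
            obtain ⟨r', hr'⟩ := ResRel_exists (ω := ω)
              (sizeOf t + sizeOf (Proc.nd l')) t (Proc.nd l') le_rfl
            have hct := aux_canonical ht hΩ (menusOf s ∪ menusOf t) hMs_t w
              (fun M _ a _ t' Ta h1 h2 => (hw M a).2 t' Ta h1 h2) hr'
            have heq : r = r' := by
              rw [hcs, hct]
              exact Finset.sum_congr rfl fun M _ => by rw [aux_RT_P1 hst M]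
            rwa [heq]

end Aux7
end Proc

/-- If two processes are probabilistically ready trace equivalent, then they
are testing equivalent: `Res(s,T) = Res(t,T)` for every test `T`. -/
theorem rtEquiv_implies_testEquiv {A : Type} [DecidableEq A] (ω : A)
    (s t : Proc A) (hs : Proc.WF s) (ht : Proc.WF t)
    (hsω : Proc.NoOmega ω s) (htω : Proc.NoOmega ω t)
    (h : Proc.RTEquiv s t) :
    Proc.TestEquiv ω s t := by
  intro T hT r
  constructor
  · exact fun hr => Proc.aux_transfer (sizeOf T) T le_rfl hT s t hs ht h r hr
  · exact fun hr => Proc.aux_transfer (sizeOf T) T le_rfl hT t s ht hs (Proc.aux_RT_symm h) r hr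
end

section
/- If two processes s and t are not probabilistically ready trace equivalent, then there exists a test T containing no probabilistic transitions such that Res(s,T) ≠ Res(t,T). -/
/-! ### Auxiliary material for the proof -/

set_option linter.unusedSectionVars false
set_option linter.unusedTactic false
namespace PRTAux

open Proc

variable {A : Type} [DecidableEq A]

noncomputable def algR (A : Type) : ℝ →+* RF A := algebraMap ℝ (RF A)
noncomputable def algP (A : Type) : MvPolynomial A ℝ →+* RF A :=
  algebraMap (MvPolynomial A ℝ) (RF A)

theorem algP_injective : Function.Injective (algP A) :=
  IsFractionRing.injective (MvPolynomial A ℝ) (RF A)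

theorem algR_injective : Function.Injective (algR A) :=
  (algebraMap ℝ (RF A)).injective

theorem RVar_eq (a : A) : RVar a = algP A (MvPolynomial.X a) := rfl

/-- evaluation of polynomials at the all-ones point -/
noncomputable def ev1 (A : Type) : MvPolynomial A ℝ →+* ℝ :=
  (MvPolynomial.eval (fun _ : A => (1:ℝ)) : MvPolynomial A ℝ →+* ℝ)

theorem ev1_X (a : A) : ev1 A (MvPolynomial.X a) = 1 := by
  simp [ev1]

theorem ev1_sum_insert (a₁ : A) (K : Finset A) (ha : a₁ ∉ K) :
    ev1 A (∑ b ∈ insert a₁ K, MvPolynomial.X b) = (K.card : ℝ) + 1 := by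
  rw [map_sum]
  simp only [ev1_X]
  rw [Finset.sum_const, Finset.card_insert_of_notMem ha]
  push_cast
  ring

theorem sum_rvar_ne_zero {K : Finset A} (hK : K.Nonempty) :
    (∑ b ∈ K, RVar b) ≠ 0 := by
  have h1 : (∑ b ∈ K, RVar b) = algP A (∑ b ∈ K, MvPolynomial.X b) := by
    rw [map_sum]; rfl
  rw [h1]
  intro h0
  have h2 : (∑ b ∈ K, MvPolynomial.X b : MvPolynomial A ℝ) = 0 :=
    algP_injective (by simpa using h0)
  have h3 := congrArg (ev1 A) h2
  rw [map_sum] at h3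
  simp only [ev1_X, map_zero, Finset.sum_const, nsmul_eq_mul, mul_one] at h3
  have : K.card = 0 := by exact_mod_cast h3
  simp [Finset.card_eq_zero] at this
  exact hK.ne_empty this

theorem rvar_ne_zero (a : A) : RVar a ≠ 0 := by
  have := sum_rvar_ne_zero (K := {a}) ⟨a, Finset.mem_singleton_self a⟩
  simpa using this

/-! ### list helpers -/

theorem list_sum_map_congr {α : Type*} {M : Type*} [AddCommMonoid M] {l : List α}
    {f g : α → M} (h : ∀ x ∈ l, f x = g x) : (l.map f).sum = (l.map g).sum := by
  rw [List.map_congr_left h]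

theorem list_sum_attach {α : Type*} {M : Type*} [AddCommMonoid M] (l : List α) (f : α → M) :
    (l.attach.map (fun x => f x.1)).sum = (l.map f).sum := by
  rw [List.attach_map_val]

theorem list_sum_flatMap {α β : Type*} {M : Type*} [AddCommMonoid M]
    (l : List α) (F : α → List β) (g : β → M) :
    ((l.flatMap F).map g).sum = (l.map (fun x => ((F x).map g).sum)).sum := by
  induction l with
  | nil => rfl
  | cons x l ih => simp [ih]

theorem list_sum_finset_sum {α β : Type*} {M : Type*} [AddCommMonoid M]
    (l : List α) (S : Finset β) (f : α → β → M) :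
    (l.map (fun x => ∑ C ∈ S, f x C)).sum = ∑ C ∈ S, (l.map (fun x => f x C)).sum := by
  induction l with
  | nil => simp
  | cons x l ih => simp [ih, Finset.sum_add_distrib]

theorem list_fiber_sum {α : Type*} (l : List α) (m : α → Finset A) (f : α → RF A)
    (𝓜 : Finset (Finset A)) (h : ∀ x ∈ l, m x ∈ 𝓜 ∨ f x = 0) :
    (l.map f).sum = ∑ M ∈ 𝓜, ((l.filter (fun x => m x = M)).map f).sum := by
  induction l with
  | nil => simp
  | cons x l ih =>
    have hrec := ih (fun y hy => h y (List.mem_cons_of_mem _ hy))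
    have key : ∀ M ∈ 𝓜, (((x :: l).filter (fun y => m y = M)).map f).sum
        = (if M = m x then f x else 0) + ((l.filter (fun y => m y = M)).map f).sum := by
      intro M _
      by_cases hxM : m x = M
      · subst hxM
        simp [List.filter_cons]
      · have : ¬ (M = m x) := fun e => hxM e.symm
        simp [List.filter_cons, hxM, this]
    rw [List.map_cons, List.sum_cons, hrec, Finset.sum_congr rfl key,
      Finset.sum_add_distrib, Finset.sum_ite_eq' 𝓜 (m x) (fun _ => f x)]
    rcases h x (List.mem_cons_self) with hmem | hzero
    · rw [if_pos hmem]
    · rw [hzero]; simp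

theorem list_mem_le_sum {l : List ℝ} (h : ∀ y ∈ l, 0 ≤ y) {x : ℝ} (hx : x ∈ l) :
    x ≤ l.sum := by
  induction l with
  | nil => cases hx
  | cons z l ih =>
    rcases List.mem_cons.mp hx with rfl | hx'
    · have : 0 ≤ l.sum := List.sum_nonneg (fun y hy => h y (List.mem_cons_of_mem _ hy))
      simp only [List.sum_cons]; linarith
    · have := ih (fun y hy => h y (List.mem_cons_of_mem _ hy)) hx'
      have h0 : 0 ≤ z := h z List.mem_cons_self
      simp only [List.sum_cons]; linarith

theorem list_exists_ne_zero_of_sum_ne_zero {α : Type*} {l : List α} {f : α → ℝ}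
    (h : (l.map f).sum ≠ 0) : ∃ x ∈ l, f x ≠ 0 := by
  by_contra hc
  push_neg at hc
  apply h
  rw [List.sum_eq_zero]
  intro y hy
  obtain ⟨x, hx, rfl⟩ := List.mem_map.mp hy
  exact hc x hx

end PRTAux

namespace PRTAux2
set_option linter.unusedSectionVars false
open Proc PRTAux

variable {A : Type} [DecidableEq A]

/-- probability that the observed initial menu intersects N -/
noncomputable def PHit : Proc A → Finset A → ℝ
  | Proc.nd l, N => if ((l.map Prod.fst).toFinset ∩ N).Nonempty then 1 else 0
  | Proc.pr l, N => (l.attach.map (fun x => x.1.1 * PHit x.1.2 N)).sum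
termination_by p _ => sizeOf p
decreasing_by
  obtain ⟨⟨r, p⟩, hmem⟩ := x
  have h := List.sizeOf_lt_of_mem hmem
  simp at h ⊢
  omega

/-- probability that the observed initial menu misses N -/
noncomputable def PMiss : Proc A → Finset A → ℝ
  | Proc.nd l, N => if ((l.map Prod.fst).toFinset ∩ N) = ∅ then 1 else 0
  | Proc.pr l, N => (l.attach.map (fun x => x.1.1 * PMiss x.1.2 N)).sum
termination_by p _ => sizeOf p
decreasing_by
  obtain ⟨⟨r, p⟩, hmem⟩ := x
  have h := List.sizeOf_lt_of_mem hmem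
  simp at h ⊢
  omega

/-- probability that the observed initial menu is contained in C -/
noncomputable def PLE : Proc A → Finset A → ℝ
  | Proc.nd l, C => if (l.map Prod.fst).toFinset ⊆ C then 1 else 0
  | Proc.pr l, C => (l.attach.map (fun x => x.1.1 * PLE x.1.2 C)).sum
termination_by p _ => sizeOf p
decreasing_by
  obtain ⟨⟨r, p⟩, hmem⟩ := x
  have h := List.sizeOf_lt_of_mem hmem
  simp at h ⊢
  omega

/-- all actions occurring anywhere in a process -/
noncomputable def acts : Proc A → Finset A
  | Proc.nd l => (l.map Prod.fst).toFinset ∪ (l.attach.map (fun x => acts x.1.2)).foldr (· ∪ ·) ∅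
  | Proc.pr l => (l.attach.map (fun x => acts x.1.2)).foldr (· ∪ ·) ∅
termination_by p => sizeOf p
decreasing_by
  all_goals
  · obtain ⟨⟨r, p⟩, hmem⟩ := x
    have h := List.sizeOf_lt_of_mem hmem
    simp at h ⊢
    omega

/-- the menus of the depth-one "branches" of a process -/
def bmenus : Proc A → Finset (Finset A)
  | Proc.nd l => {(l.map Prod.fst).toFinset}
  | Proc.pr l => (l.map (fun x => x.2.menu)).toFinset

/-! ### unfolding lemmas -/

theorem P1_nd (l : List (A × Proc A)) (M : Finset A) :
    P1 (Proc.nd l) M = if (l.map Prod.fst).toFinset = M then 1 else 0 := by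
  simp [P1]

theorem P1_pr (l : List (ℝ × Proc A)) (M : Finset A) :
    P1 (Proc.pr l) M = (l.map (fun x => x.1 * P1 x.2 M)).sum := by
  rw [P1]
  exact list_sum_attach l (fun x => x.1 * P1 x.2 M)

theorem PHit_nd (l : List (A × Proc A)) (N : Finset A) :
    PHit (Proc.nd l) N = if ((l.map Prod.fst).toFinset ∩ N).Nonempty then 1 else 0 := by
  simp [PHit]

theorem PHit_pr (l : List (ℝ × Proc A)) (N : Finset A) :
    PHit (Proc.pr l) N = (l.map (fun x => x.1 * PHit x.2 N)).sum := by
  rw [PHit]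
  exact list_sum_attach l (fun x => x.1 * PHit x.2 N)

theorem PMiss_nd (l : List (A × Proc A)) (N : Finset A) :
    PMiss (Proc.nd l) N = if ((l.map Prod.fst).toFinset ∩ N) = ∅ then 1 else 0 := by
  simp [PMiss]

theorem PMiss_pr (l : List (ℝ × Proc A)) (N : Finset A) :
    PMiss (Proc.pr l) N = (l.map (fun x => x.1 * PMiss x.2 N)).sum := by
  rw [PMiss]
  exact list_sum_attach l (fun x => x.1 * PMiss x.2 N)

theorem PLE_nd (l : List (A × Proc A)) (C : Finset A) :
    PLE (Proc.nd l) C = if (l.map Prod.fst).toFinset ⊆ C then 1 else 0 := by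
  simp [PLE]

theorem PLE_pr (l : List (ℝ × Proc A)) (C : Finset A) :
    PLE (Proc.pr l) C = (l.map (fun x => x.1 * PLE x.2 C)).sum := by
  rw [PLE]
  exact list_sum_attach l (fun x => x.1 * PLE x.2 C)

theorem mem_foldr_union {b : A} (L : List (Finset A)) :
    b ∈ L.foldr (· ∪ ·) ∅ ↔ ∃ S ∈ L, b ∈ S := by
  induction L with
  | nil => simp
  | cons S L ih => simp [ih]

theorem menu_subset_acts (s : Proc A) : s.menu ⊆ acts s := by
  cases s with
  | nd l => rw [acts]; exact Finset.subset_union_left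
  | pr l => simp [menu]

theorem acts_child_nd {l : List (A × Proc A)} {x : A × Proc A} (hx : x ∈ l) :
    acts x.2 ⊆ acts (Proc.nd l) := by
  intro b hb
  rw [acts]
  apply Finset.mem_union_right
  rw [mem_foldr_union]
  exact ⟨acts x.2, List.mem_map.mpr ⟨⟨x, hx⟩, List.mem_attach l ⟨x, hx⟩, by simp⟩, hb⟩

theorem acts_child_pr {l : List (ℝ × Proc A)} {x : ℝ × Proc A} (hx : x ∈ l) :
    acts x.2 ⊆ acts (Proc.pr l) := by
  intro b hb
  rw [acts]
  rw [mem_foldr_union]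
  exact ⟨acts x.2, List.mem_map.mpr ⟨⟨x, hx⟩, List.mem_attach l ⟨x, hx⟩, by simp⟩, hb⟩

/-! ### WF / NoOmega helpers -/

theorem WF_children_nd {l : List (A × Proc A)} (h : WF (Proc.nd l)) :
    ∀ x ∈ l, WF x.2 := by cases h; assumption

theorem WF_nodup {l : List (A × Proc A)} (h : WF (Proc.nd l)) :
    (l.map Prod.fst).Nodup := by cases h; assumption

theorem WF_children_pr {l : List (ℝ × Proc A)} (h : WF (Proc.pr l)) :
    ∀ x ∈ l, WF x.2 := by cases h; assumption

theorem WF_weights {l : List (ℝ × Proc A)} (h : WF (Proc.pr l)) :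
    ∀ x ∈ l, 0 < x.1 ∧ x.1 ≤ 1 ∧ ∃ l', x.2 = Proc.nd l' := by cases h; assumption

theorem WF_sum {l : List (ℝ × Proc A)} (h : WF (Proc.pr l)) :
    (l.map Prod.fst).sum = 1 := by cases h; assumption

theorem NoOmega_menu {ω : A} {l : List (A × Proc A)} (h : NoOmega ω (Proc.nd l)) :
    ω ∉ l.map Prod.fst := by cases h; assumption

theorem NoOmega_children_nd {ω : A} {l : List (A × Proc A)} (h : NoOmega ω (Proc.nd l)) :
    ∀ x ∈ l, NoOmega ω x.2 := by cases h; assumption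

theorem NoOmega_children_pr {ω : A} {l : List (ℝ × Proc A)} (h : NoOmega ω (Proc.pr l)) :
    ∀ x ∈ l, NoOmega ω x.2 := by cases h; assumption

theorem noOmega_acts {ω : A} : ∀ n (s : Proc A), sizeOf s ≤ n → NoOmega ω s → ω ∉ acts s := by
  intro n
  induction n with
  | zero => intro s h; cases s <;> simp at h
  | succ n ih =>
    intro s hn ho hmem
    cases s with
    | nd l =>
      rw [acts] at hmem
      rcases Finset.mem_union.mp hmem with h1 | h1
      · exact NoOmega_menu ho (by simpa using h1)
      · rw [mem_foldr_union] at h1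
        obtain ⟨S, hS, hbS⟩ := h1
        obtain ⟨⟨x, hx⟩, _, rfl⟩ := List.mem_map.mp hS
        have hsz : sizeOf x.2 ≤ n := by
          have := List.sizeOf_lt_of_mem hx
          obtain ⟨a, p⟩ := x
          simp at this hn ⊢
          omega
        exact ih x.2 hsz (NoOmega_children_nd ho x hx) hbS
    | pr l =>
      rw [acts, mem_foldr_union] at hmem
      obtain ⟨S, hS, hbS⟩ := hmem
      obtain ⟨⟨x, hx⟩, _, rfl⟩ := List.mem_map.mp hS
      have hsz : sizeOf x.2 ≤ n := by
        have := List.sizeOf_lt_of_mem hx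
        obtain ⟨a, p⟩ := x
        simp at this hn ⊢
        omega
      exact ih x.2 hsz (NoOmega_children_pr ho x hx) hbS

/-! ### step lemmas -/

theorem step_isSome_of_mem {l : List (A × Proc A)} {a : A} (h : a ∈ l.map Prod.fst) :
    ∃ q, step (Proc.nd l) a = some q := by
  obtain ⟨x, hx, hxa⟩ := List.mem_map.mp h
  have : (l.find? (fun x => x.1 = a)).isSome := by
    rw [List.find?_isSome]
    exact ⟨x, hx, by simp [hxa]⟩
  obtain ⟨y, hy⟩ := Option.isSome_iff_exists.mp this
  exact ⟨y.2, by simp [step, hy]⟩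

theorem step_none {l : List (A × Proc A)} {a : A} (h : a ∉ l.map Prod.fst) :
    step (Proc.nd l) a = none := by
  have : l.find? (fun x => x.1 = a) = none := by
    rw [List.find?_eq_none]
    intro x hx hxa
    exact h (List.mem_map.mpr ⟨x, hx, by simpa using hxa⟩)
  simp [step, this]

theorem step_mem {l : List (A × Proc A)} {a : A} {q : Proc A}
    (h : step (Proc.nd l) a = some q) : ∃ x ∈ l, x.1 = a ∧ x.2 = q := by
  simp only [step, Option.map_eq_some_iff] at h
  obtain ⟨y, hy, hyq⟩ := h
  refine ⟨y, List.mem_of_find?_eq_some hy, ?_, hyq⟩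
  have := List.find?_some hy
  simpa using this

end PRTAux2

namespace PRTAux3
set_option linter.unusedSectionVars false
open Proc PRTAux PRTAux2
open scoped Classical

variable {A : Type} [DecidableEq A]

theorem P1_nonneg : ∀ n (s : Proc A), sizeOf s ≤ n → WF s → ∀ M, 0 ≤ P1 s M := by
  intro n
  induction n with
  | zero => intro s h; cases s <;> simp at h
  | succ n ih =>
    intro s hn hwf M
    cases s with
    | nd l => rw [P1_nd]; split <;> norm_num
    | pr l =>
      rw [P1_pr]
      apply List.sum_nonneg
      intro y hy
      obtain ⟨x, hx, rfl⟩ := List.mem_map.mp hy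
      have hsz : sizeOf x.2 ≤ n := by
        have := List.sizeOf_lt_of_mem hx
        obtain ⟨a, p⟩ := x
        simp at this hn ⊢
        omega
      exact mul_nonneg (le_of_lt (WF_weights hwf x hx).1)
        (ih x.2 hsz (WF_children_pr hwf x hx) M)

theorem P1_pos_menu {l : List (A × Proc A)} {M : Finset A}
    (h : 0 < P1 (Proc.nd l) M) : (l.map Prod.fst).toFinset = M := by
  rw [P1_nd] at h
  by_contra hc
  rw [if_neg hc] at h
  exact lt_irrefl _ h

/-- the total weight of branches with menu M computes P1 for a WF `pr` process -/
theorem P1_pr_tot {l : List (ℝ × Proc A)} (hwf : WF (Proc.pr l)) (M : Finset A) :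
    P1 (Proc.pr l) M = ((l.filter (fun x => x.2.menu = M)).map Prod.fst).sum := by
  rw [P1_pr]
  have hch := WF_weights hwf
  clear hwf
  induction l with
  | nil => simp
  | cons x l ih =>
    have hx := hch x List.mem_cons_self
    obtain ⟨lx, hlx⟩ := hx.2.2
    have hrec := ih (fun y hy => hch y (List.mem_cons_of_mem _ hy))
    by_cases hm : x.2.menu = M
    · have : P1 x.2 M = 1 := by
        rw [hlx] at hm ⊢
        rw [P1_nd, if_pos (by simpa [menu] using hm)]
      simp only [List.map_cons, List.sum_cons, hrec, List.filter_cons, hm]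
      simp [this]
    · have : P1 x.2 M = 0 := by
        rw [hlx] at hm ⊢
        rw [P1_nd, if_neg (by simpa [menu] using hm)]
      simp only [List.map_cons, List.sum_cons, hrec, List.filter_cons, hm]
      simp [this]

theorem noOmega_notmem_of_P1_pos {ω : A} :
    ∀ n (s : Proc A), sizeOf s ≤ n → WF s → NoOmega ω s → ∀ M, 0 < P1 s M → ω ∉ M := by
  intro n
  induction n with
  | zero => intro s h; cases s <;> simp at h
  | succ n ih =>
    intro s hn hwf ho M hpos
    cases s with
    | nd l =>
      have := P1_pos_menu hpos
      rw [← this]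
      intro hc
      exact NoOmega_menu ho (by simpa using hc)
    | pr l =>
      rw [P1_pr] at hpos
      obtain ⟨x, hx, hne⟩ := list_exists_ne_zero_of_sum_ne_zero (ne_of_gt hpos)
      have hsz : sizeOf x.2 ≤ n := by
        have := List.sizeOf_lt_of_mem hx
        obtain ⟨a, p⟩ := x
        simp at this hn ⊢
        omega
      have hwx := WF_children_pr hwf x hx
      have hP1 : P1 x.2 M ≠ 0 := fun h0 => hne (by rw [h0, mul_zero])
      have hP1pos : 0 < P1 x.2 M :=
        lt_of_le_of_ne (P1_nonneg n x.2 hsz hwx M) (Ne.symm hP1)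
      exact ih x.2 hsz hwx (NoOmega_children_pr ho x hx) M hP1pos

theorem mem_bmenus_of_P1_pos {s : Proc A} {M : Finset A} (hwf : WF s)
    (h : 0 < P1 s M) : M ∈ bmenus s := by
  cases s with
  | nd l => rw [bmenus]; simp [P1_pos_menu h]
  | pr l =>
    rw [P1_pr] at h
    obtain ⟨x, hx, hne⟩ := list_exists_ne_zero_of_sum_ne_zero (ne_of_gt h)
    have hP1 : P1 x.2 M ≠ 0 := fun h0 => hne (by rw [h0, mul_zero])
    obtain ⟨lx, hlx⟩ := (WF_weights hwf x hx).2.2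
    have : x.2.menu = M := by
      by_contra hc
      apply hP1
      rw [hlx] at hc ⊢
      rw [P1_nd, if_neg (by simpa [menu] using hc)]
    rw [bmenus]
    exact List.mem_toFinset.mpr (List.mem_map.mpr ⟨x, hx, this⟩)

theorem bmenus_subset_acts {s : Proc A} {M : Finset A} (h : M ∈ bmenus s) :
    M ⊆ acts s := by
  cases s with
  | nd l =>
    rw [bmenus, Finset.mem_singleton] at h
    subst h
    exact menu_subset_acts (Proc.nd l)
  | pr l =>
    rw [bmenus] at h
    obtain ⟨x, hx, rfl⟩ := List.mem_map.mp (List.mem_toFinset.mp h)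
    exact (menu_subset_acts x.2).trans (acts_child_pr hx)

theorem bmenus_noOmega {ω : A} {s : Proc A} {M : Finset A} (ho : NoOmega ω s)
    (h : M ∈ bmenus s) : ω ∉ M := by
  intro hc
  have h1 := bmenus_subset_acts h hc
  exact noOmega_acts (sizeOf s) s le_rfl ho h1

/-! ### basic ResRel facts -/

theorem rcast {ω : A} {s T : Proc A} {r r' : RF A}
    (h : ResRel ω s T r) (e : r = r') : ResRel ω s T r' := e ▸ h

theorem resrel_dead (ω : A) : ∀ n (q : Proc A), sizeOf q ≤ n → ResRel ω q (Proc.nd []) 0 := by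
  intro n
  induction n with
  | zero => intro q h; cases q <;> simp at h
  | succ n ih =>
    intro q hn
    cases q with
    | nd l =>
      refine rcast (ResRel.sync l [] (fun _ => 0) (by simp) ?_) ?_
      · intro a ha
        simp at ha
      · simp
    | pr l =>
      refine rcast (ResRel.probL l (Proc.nd []) (fun _ => 0) (by simp [hasOmega]) ?_) ?_
      · intro x hx
        have hsz : sizeOf x.2 ≤ n := by
          have := List.sizeOf_lt_of_mem hx
          obtain ⟨a, p⟩ := x
          simp at this hn ⊢
          omega
        exact ih x.2 hsz
      · simp

theorem resrel_total (ω : A) : ∀ n (q T : Proc A), sizeOf q + sizeOf T ≤ n →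
    ∃ r, ResRel ω q T r := by
  intro n
  induction n with
  | zero => intro q T h; cases q <;> simp at h
  | succ n ih =>
    intro q T hn
    cases T with
    | pr l' =>
      cases q with
      | nd l =>
        refine ⟨_, ResRel.probR l l'
          (fun x => if h : ∃ v, ResRel ω (Proc.nd l) x.2 v then h.choose else 0) ?_⟩
        intro x hx
        have hsz : sizeOf (Proc.nd l) + sizeOf x.2 ≤ n := by
          have := List.sizeOf_lt_of_mem hx
          obtain ⟨a, p⟩ := x
          simp at this hn ⊢
          omega
        have hex : ∃ v, ResRel ω (Proc.nd l) x.2 v := ih _ _ hsz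
        beta_reduce
        rw [dif_pos hex]
        exact hex.choose_spec
      | pr l =>
        refine ⟨_, ResRel.probL l (Proc.pr l')
          (fun x => if h : ∃ v, ResRel ω x.2 (Proc.pr l') v then h.choose else 0)
          (by simp [hasOmega]) ?_⟩
        intro x hx
        have hsz : sizeOf x.2 + sizeOf (Proc.pr l') ≤ n := by
          have := List.sizeOf_lt_of_mem hx
          obtain ⟨a, p⟩ := x
          simp at this hn ⊢
          omega
        have hex : ∃ v, ResRel ω x.2 (Proc.pr l') v := ih _ _ hsz
        beta_reduce
        rw [dif_pos hex]
        exact hex.choose_spec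
    | nd l' =>
      by_cases hω : ω ∈ l'.map Prod.fst
      · exact ⟨1, ResRel.success _ l' hω⟩
      cases q with
      | pr l =>
        refine ⟨_, ResRel.probL l (Proc.nd l')
          (fun x => if h : ∃ v, ResRel ω x.2 (Proc.nd l') v then h.choose else 0)
          (by simpa [hasOmega] using hω) ?_⟩
        intro x hx
        have hsz : sizeOf x.2 + sizeOf (Proc.nd l') ≤ n := by
          have := List.sizeOf_lt_of_mem hx
          obtain ⟨a, p⟩ := x
          simp at this hn ⊢
          omega
        have hex : ∃ v, ResRel ω x.2 (Proc.nd l') v := ih _ _ hsz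
        beta_reduce
        rw [dif_pos hex]
        exact hex.choose_spec
      | nd l =>
        refine ⟨_, ResRel.sync l l'
          (fun a => if h : ∃ v, ∀ sa Ta, step (Proc.nd l) a = some sa →
            step (Proc.nd l') a = some Ta → ResRel ω sa Ta v then h.choose else 0)
          hω ?_⟩
        intro a ha sa Ta hsa hTa
        have hsza : sizeOf sa + sizeOf Ta ≤ n := by
          obtain ⟨x, hx, _, hx2⟩ := step_mem hsa
          obtain ⟨y, hy, _, hy2⟩ := step_mem hTa
          have h1 := List.sizeOf_lt_of_mem hx
          have h2 := List.sizeOf_lt_of_mem hy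
          obtain ⟨xa, xp⟩ := x
          obtain ⟨ya, yp⟩ := y
          subst hx2 hy2
          simp at h1 h2 hn ⊢
          omega
        have hex : ∃ v, ∀ sa' Ta', step (Proc.nd l) a = some sa' →
            step (Proc.nd l') a = some Ta' → ResRel ω sa' Ta' v := by
          obtain ⟨v, hv⟩ := ih sa Ta hsza
          refine ⟨v, fun sa' Ta' hsa' hTa' => ?_⟩
          rw [hsa] at hsa'
          rw [hTa] at hTa'
          rw [← Option.some.inj hsa', ← Option.some.inj hTa']
          exact hv
        beta_reduce
        rw [dif_pos hex]
        exact hex.choose_spec sa Ta hsa hTa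

theorem resrel_omega_menu {ω : A} {q : Proc A} {l' : List (A × Proc A)} {r : RF A}
    (h : ResRel ω q (Proc.nd l') r) (hω : ω ∈ l'.map Prod.fst) : r = 1 := by
  cases h with
  | success => rfl
  | probL _ _ _ hT _ => exact absurd (by simpa [hasOmega] using hω) hT
  | sync _ _ _ hω' _ => exact absurd hω hω'

theorem resrel_pr_inv {ω : A} {l : List (ℝ × Proc A)} {l' : List (A × Proc A)} {r : RF A}
    (h : ResRel ω (Proc.pr l) (Proc.nd l') r) (hω : ω ∉ l'.map Prod.fst) :
    ∃ rf : ℝ × Proc A → RF A, (∀ x ∈ l, ResRel ω x.2 (Proc.nd l') (rf x)) ∧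
      r = (l.map (fun x => algebraMap ℝ (RF A) x.1 * rf x)).sum := by
  cases h with
  | success _ _ hmem => exact absurd hmem hω
  | probL _ _ rf _ hh => exact ⟨rf, hh, rfl⟩

end PRTAux3

namespace PRTAux4
set_option linter.unusedSectionVars false
open Proc PRTAux PRTAux2 PRTAux3
open scoped Classical

variable {A : Type} [DecidableEq A]

def selL (l : List (ℝ × Proc A)) (M : Finset A) : List (ℝ × Proc A) :=
  l.filter (fun x => x.2.menu = M)

noncomputable def totL (l : List (ℝ × Proc A)) (M : Finset A) : ℝ :=
  ((selL l M).map Prod.fst).sum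

noncomputable def entL (l : List (ℝ × Proc A)) (M : Finset A) (a : A) : List (ℝ × Proc A) :=
  (selL l M).flatMap (fun x =>
    match x.2.step a with
    | none => []
    | some q => flat (x.1 / totL l M) q)

theorem after_nd (l : List (A × Proc A)) (M : Finset A) (a : A) :
    after (Proc.nd l) M a =
      if (l.map Prod.fst).toFinset = M then step (Proc.nd l) a else none := rfl

theorem after_pr (l : List (ℝ × Proc A)) (M : Finset A) (a : A) :
    after (Proc.pr l) M a =
      if (entL l M a).isEmpty then none else some (Proc.pr (entL l M a)) := rfl

theorem flat_nd (w : ℝ) (l0 : List (A × Proc A)) :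
    flat w (Proc.nd l0) = [(w, Proc.nd l0)] := rfl

theorem flat_pr (w : ℝ) (l'' : List (ℝ × Proc A)) :
    flat w (Proc.pr l'') = l''.map (fun y => (w * y.1, y.2)) := rfl

theorem mem_selL {l : List (ℝ × Proc A)} {M : Finset A} {x : ℝ × Proc A}
    (h : x ∈ selL l M) : x ∈ l ∧ x.2.menu = M := by
  have := List.mem_filter.mp h
  exact ⟨this.1, by simpa using this.2⟩

theorem totL_eq {l : List (ℝ × Proc A)} (hwf : WF (Proc.pr l)) (M : Finset A) :
    totL l M = P1 (Proc.pr l) M := (P1_pr_tot hwf M).symm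

theorem selL_step_some {l : List (ℝ × Proc A)} {M₁ : Finset A} {a₁ : A}
    (hwf : WF (Proc.pr l)) (ha : a₁ ∈ M₁) {x : ℝ × Proc A} (hx : x ∈ selL l M₁) :
    ∃ q, step x.2 a₁ = some q := by
  obtain ⟨hxl, hmenu⟩ := mem_selL hx
  obtain ⟨lx, hlx⟩ := (WF_weights hwf x hxl).2.2
  rw [hlx]
  apply step_isSome_of_mem
  rw [hlx] at hmenu
  simp only [menu] at hmenu
  rw [← List.mem_toFinset, hmenu]
  exact ha

theorem selL_ne_nil {l : List (ℝ × Proc A)} {M₁ : Finset A}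
    (hwf : WF (Proc.pr l)) (hpos : 0 < P1 (Proc.pr l) M₁) : selL l M₁ ≠ [] := by
  intro hc
  rw [← totL_eq hwf] at hpos
  rw [totL, hc] at hpos
  simp at hpos

/-- key structure lemma about `after` for positive-probability menus -/
theorem after_some {ω : A} {s : Proc A} {M₁ : Finset A} {a₁ : A}
    (hwf : WF s) (hno : NoOmega ω s) (hpos : 0 < P1 s M₁) (ha : a₁ ∈ M₁) :
    ∃ s', after s M₁ a₁ = some s' ∧ WF s' ∧ NoOmega ω s' := by
  cases s with
  | nd l =>
    have hmenu := P1_pos_menu hpos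
    obtain ⟨s', hs'⟩ := step_isSome_of_mem (l := l) (a := a₁)
      (by rw [← List.mem_toFinset, hmenu]; exact ha)
    refine ⟨s', by rw [after_nd, if_pos hmenu]; exact hs', ?_, ?_⟩
    · obtain ⟨x, hxl, _, hx2⟩ := step_mem hs'
      exact hx2 ▸ WF_children_nd hwf x hxl
    · obtain ⟨x, hxl, _, hx2⟩ := step_mem hs'
      exact hx2 ▸ NoOmega_children_nd hno x hxl
  | pr l =>
    have htot : totL l M₁ = P1 (Proc.pr l) M₁ := totL_eq hwf M₁
    have htotpos : 0 < totL l M₁ := htot ▸ hpos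
    -- membership facts for entries
    have hmem : ∀ e ∈ entL l M₁ a₁,
        (0 < e.1 ∧ e.1 ≤ 1 ∧ ∃ l0, e.2 = Proc.nd l0) ∧ WF e.2 ∧ NoOmega ω e.2 := by
      intro e he
      rw [entL] at he
      obtain ⟨x, hxsel, harm⟩ := List.mem_flatMap.mp he
      obtain ⟨hxl, hmenu⟩ := mem_selL hxsel
      have hx1 : 0 < x.1 := (WF_weights hwf x hxl).1
      have hxle : x.1 ≤ totL l M₁ := by
        apply list_mem_le_sum
        · intro y hy
          obtain ⟨z, hz, rfl⟩ := List.mem_map.mp hy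
          exact le_of_lt (WF_weights hwf z (mem_selL hz).1).1
        · exact List.mem_map.mpr ⟨x, hxsel, rfl⟩
      have hwpos : 0 < x.1 / totL l M₁ := div_pos hx1 htotpos
      have hwle : x.1 / totL l M₁ ≤ 1 := (div_le_one htotpos).mpr hxle
      cases hq : step x.2 a₁ with
      | none => rw [hq] at harm; cases harm
      | some q =>
        rw [hq] at harm
        have hwq : WF q := by
          obtain ⟨lx, hlx⟩ := (WF_weights hwf x hxl).2.2
          rw [hlx] at hq
          obtain ⟨y, hyl, _, hy2⟩ := step_mem hq
          exact hy2 ▸ WF_children_nd (hlx ▸ WF_children_pr hwf x hxl) y hyl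
        have hnq : NoOmega ω q := by
          obtain ⟨lx, hlx⟩ := (WF_weights hwf x hxl).2.2
          rw [hlx] at hq
          obtain ⟨y, hyl, _, hy2⟩ := step_mem hq
          exact hy2 ▸ NoOmega_children_nd (hlx ▸ NoOmega_children_pr hno x hxl) y hyl
        cases q with
        | nd l0 =>
          replace harm : e ∈ [(x.1 / totL l M₁, Proc.nd l0)] := harm
          replace harm : e = (x.1 / totL l M₁, Proc.nd l0) := List.mem_singleton.mp harm
          subst harm
          exact ⟨⟨hwpos, hwle, l0, rfl⟩, hwq, hnq⟩
        | pr l'' =>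
          replace harm : e ∈ l''.map (fun y => (x.1 / totL l M₁ * y.1, y.2)) := harm
          obtain ⟨y, hyl, rfl⟩ := List.mem_map.mp harm
          obtain ⟨hy1, hy2, hy3⟩ := WF_weights hwq y hyl
          refine ⟨⟨mul_pos hwpos hy1, ?_, hy3⟩,
            WF_children_pr hwq y hyl, NoOmega_children_pr hnq y hyl⟩
          nlinarith
    -- sum of entry weights is 1
    have hsum : ((entL l M₁ a₁).map Prod.fst).sum = 1 := by
      rw [entL, list_sum_flatMap]
      have hcongr : ∀ x ∈ selL l M₁,
          (((match x.2.step a₁ with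
            | none => []
            | some q => flat (x.1 / totL l M₁) q : List (ℝ × Proc A))).map Prod.fst).sum
          = x.1 / totL l M₁ := by
        intro x hxsel
        obtain ⟨hxl, hmenu⟩ := mem_selL hxsel
        obtain ⟨q, hq⟩ := selL_step_some hwf ha hxsel
        rw [hq]
        cases q with
        | nd l0 => simp [flat_nd]
        | pr l'' =>
          have hwq : WF (Proc.pr l'') := by
            obtain ⟨lx, hlx⟩ := (WF_weights hwf x hxl).2.2
            rw [hlx] at hq
            obtain ⟨y, hyl, _, hy2⟩ := step_mem hq
            exact hy2 ▸ WF_children_nd (hlx ▸ WF_children_pr hwf x hxl) y hyl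
          show ((l''.map (fun y : ℝ × Proc A => (x.1 / totL l M₁ * y.1, y.2))).map Prod.fst).sum
            = x.1 / totL l M₁
          rw [List.map_map]
          have : (Prod.fst ∘ fun y : ℝ × Proc A => (x.1 / totL l M₁ * y.1, y.2))
              = fun y : ℝ × Proc A => x.1 / totL l M₁ * y.1 := rfl
          rw [this, List.sum_map_mul_left, WF_sum hwq]
          ring
      rw [list_sum_map_congr hcongr]
      have : (selL l M₁).map (fun x : ℝ × Proc A => x.1 / totL l M₁)
          = (selL l M₁).map (fun x : ℝ × Proc A => x.1 * (totL l M₁)⁻¹) := by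
        apply List.map_congr_left
        intro x _
        rw [div_eq_mul_inv]
      rw [this, List.sum_map_mul_right]
      have h2 : ((selL l M₁).map (fun x : ℝ × Proc A => x.1)).sum = totL l M₁ := rfl
      rw [h2, mul_inv_cancel₀ (ne_of_gt htotpos)]
    -- entries nonempty
    have hne : (entL l M₁ a₁).isEmpty = false := by
      have hselne := selL_ne_nil hwf hpos
      obtain ⟨x, hxsel⟩ := List.exists_mem_of_ne_nil _ hselne
      obtain ⟨q, hq⟩ := selL_step_some hwf ha hxsel
      have : ∃ e, e ∈ entL l M₁ a₁ := by
        rw [entL]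
        cases q with
        | nd l0 =>
          exact ⟨(x.1 / totL l M₁, Proc.nd l0),
            List.mem_flatMap.mpr ⟨x, hxsel, by rw [hq]; exact List.mem_singleton.mpr rfl⟩⟩
        | pr l'' =>
          have hwq : WF (Proc.pr l'') := by
            obtain ⟨hxl, _⟩ := mem_selL hxsel
            obtain ⟨lx, hlx⟩ := (WF_weights hwf x hxl).2.2
            rw [hlx] at hq
            obtain ⟨y, hyl, _, hy2⟩ := step_mem hq
            exact hy2 ▸ WF_children_nd (hlx ▸ WF_children_pr hwf x hxl) y hyl
          have hl'' : l'' ≠ [] := by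
            intro hc
            have := WF_sum hwq
            rw [hc] at this
            simp at this
          obtain ⟨y, hy⟩ := List.exists_mem_of_ne_nil _ hl''
          exact ⟨(x.1 / totL l M₁ * y.1, y.2),
            List.mem_flatMap.mpr ⟨x, hxsel, by
              rw [hq]
              exact List.mem_map.mpr ⟨y, hy, rfl⟩⟩⟩
      obtain ⟨e, he⟩ := this
      rw [List.isEmpty_eq_false_iff]
      intro hc
      rw [hc] at he
      cases he
    refine ⟨Proc.pr (entL l M₁ a₁), ?_, ?_, ?_⟩
    · rw [after_pr, hne]
      simp
    · exact WF.pr _ (fun e he => (hmem e he).1) hsum (fun e he => (hmem e he).2.1)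
    · exact NoOmega.pr _ (fun e he => (hmem e he).2.2)

theorem after_none {s : Proc A} {M₁ : Finset A} {a₁ : A}
    (hwf : WF s) (hpos : 0 < P1 s M₁) (ha : a₁ ∉ M₁) :
    after s M₁ a₁ = none := by
  cases s with
  | nd l =>
    have hmenu := P1_pos_menu hpos
    rw [after_nd, if_pos hmenu]
    apply step_none
    intro hc
    exact ha (hmenu ▸ List.mem_toFinset.mpr hc)
  | pr l =>
    have hent : entL l M₁ a₁ = [] := by
      rw [entL]
      rw [List.flatMap_eq_nil_iff]
      intro x hxsel
      obtain ⟨hxl, hmenu⟩ := mem_selL hxsel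
      obtain ⟨lx, hlx⟩ := (WF_weights hwf x hxl).2.2
      have : step x.2 a₁ = none := by
        rw [hlx]
        apply step_none
        intro hc
        apply ha
        rw [hlx] at hmenu
        simp only [menu] at hmenu
        rw [← hmenu]
        exact List.mem_toFinset.mpr hc
      rw [this]
    rw [after_pr, hent]
    simp

end PRTAux4

namespace PRTAux5
set_option linter.unusedSectionVars false
open Proc PRTAux PRTAux2 PRTAux3 PRTAux4
open scoped Classical

variable {A : Type} [DecidableEq A]

theorem sum_powerset_neg_one {α R : Type*} [DecidableEq α] [Ring R] (K : Finset α) :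
    ∑ m ∈ K.powerset, (-1:R)^m.card = if K = ∅ then 1 else 0 := by
  have h := Finset.sum_powerset_neg_one_pow_card (x := K)
  have h2 := congrArg (fun z : ℤ => (z : R)) h
  push_cast at h2
  simpa [apply_ite (fun z : ℤ => (z : R))] using h2

noncomputable def hitT (ω : A) (N : Finset A) : Proc A :=
  Proc.nd (N.toList.map (fun a => (a, Proc.nd [(ω, Proc.nd [])])))

theorem hitT_fst (ω : A) (N : Finset A) :
    ((N.toList.map (fun a => (a, Proc.nd [(ω, Proc.nd ([] : List (A × Proc A)))]))).map
      Prod.fst) = N.toList := by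
  rw [List.map_map]
  show List.map (fun a => a) N.toList = N.toList
  exact List.map_id' N.toList

theorem hitT_WF (ω : A) (N : Finset A) : WF (hitT ω N) := by
  refine WF.nd _ ?_ ?_
  · rw [hitT_fst]
    exact N.nodup_toList
  · intro x hx
    obtain ⟨a, _, rfl⟩ := List.mem_map.mp hx
    exact WF.nd _ (by simp) (by
      rintro y hy
      simp at hy
      subst hy
      exact WF.nd [] (by simp) (by simp))

theorem hitT_NoProb (ω : A) (N : Finset A) : NoProb (hitT ω N) := by
  refine NoProb.nd _ ?_
  intro x hx
  obtain ⟨a, _, rfl⟩ := List.mem_map.mp hx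
  refine NoProb.nd _ ?_
  rintro y hy
  simp at hy
  subst hy
  exact NoProb.nd [] (by simp)

theorem resrel_hit (ω : A) (N : Finset A) (hωN : ω ∉ N) :
    ∀ n (s : Proc A), sizeOf s ≤ n → ResRel ω s (hitT ω N) (algR A (PHit s N)) := by
  intro n
  induction n with
  | zero => intro s h; cases s <;> simp at h
  | succ n ih =>
    intro s hn
    cases s with
    | nd l =>
      refine rcast (ResRel.sync l _ (fun _ => 1) ?_ ?_) ?_
      · rw [hitT_fst]
        simpa using hωN
      · intro a ha sa Ta hsa hTa
        obtain ⟨x, hxl, _, hx2⟩ := step_mem hTa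
        obtain ⟨b, _, rfl⟩ := List.mem_map.mp hxl
        rw [← hx2]
        exact ResRel.success _ _ (by simp)
      · rw [hitT_fst, Finset.toList_toFinset, PHit_nd]
        by_cases hne : ((l.map Prod.fst).toFinset ∩ N).Nonempty
        · rw [if_pos hne, map_one]
          have hS := sum_rvar_ne_zero (A := A) hne
          calc ∑ a ∈ (l.map Prod.fst).toFinset ∩ N,
                (RVar a / ∑ b ∈ (l.map Prod.fst).toFinset ∩ N, RVar b) * 1
              = (∑ a ∈ (l.map Prod.fst).toFinset ∩ N, RVar a) /
                  (∑ b ∈ (l.map Prod.fst).toFinset ∩ N, RVar b) := by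
                rw [Finset.sum_div]
                exact Finset.sum_congr rfl (fun a _ => by rw [mul_one])
            _ = 1 := div_self hS
        · rw [if_neg hne, map_zero]
          rw [Finset.not_nonempty_iff_eq_empty] at hne
          rw [hne]
          simp
    | pr l =>
      refine rcast (ResRel.probL l _ (fun x => algR A (PHit x.2 N)) ?_ ?_) ?_
      · show ¬ hasOmega ω (Proc.nd _)
        simp only [hasOmega]
        rw [hitT_fst]
        simpa using hωN
      · intro x hx
        have hsz : sizeOf x.2 ≤ n := by
          have := List.sizeOf_lt_of_mem hx
          obtain ⟨a, p⟩ := x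
          simp at this hn ⊢
          omega
        exact ih x.2 hsz
      · rw [PHit_pr, map_list_sum, List.map_map]
        refine list_sum_map_congr ?_
        intro x _
        show algebraMap ℝ (RF A) x.1 * algR A (PHit x.2 N) = algR A (x.1 * PHit x.2 N)
        rw [map_mul]
        rfl

theorem PHit_add_PMiss : ∀ n (s : Proc A), sizeOf s ≤ n → WF s → ∀ N,
    PHit s N + PMiss s N = 1 := by
  intro n
  induction n with
  | zero => intro s h; cases s <;> simp at h
  | succ n ih =>
    intro s hn hwf N
    cases s with
    | nd l =>
      rw [PHit_nd, PMiss_nd]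
      by_cases hne : ((l.map Prod.fst).toFinset ∩ N).Nonempty
      · rw [if_pos hne, if_neg hne.ne_empty]; ring
      · rw [if_neg hne, if_pos (Finset.not_nonempty_iff_eq_empty.mp hne)]; ring
    | pr l =>
      rw [PHit_pr, PMiss_pr, ← List.sum_map_add]
      have h1 : (l.map (fun x => x.1 * PHit x.2 N + x.1 * PMiss x.2 N)).sum
          = (l.map (fun x : ℝ × Proc A => x.1)).sum := by
        apply list_sum_map_congr
        intro x hx
        have hsz : sizeOf x.2 ≤ n := by
          have := List.sizeOf_lt_of_mem hx
          obtain ⟨a, p⟩ := x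
          simp at this hn ⊢
          omega
        rw [← mul_add, ih x.2 hsz (WF_children_pr hwf x hx) N, mul_one]
      rw [h1]
      exact WF_sum hwf

theorem PLE_eq_PMiss (ω : A) (U : Finset A) : ∀ n (s : Proc A), sizeOf s ≤ n →
    NoOmega ω s → acts s ⊆ insert ω U → ∀ C, PLE s C = PMiss s (U \ C) := by
  intro n
  induction n with
  | zero => intro s h; cases s <;> simp at h
  | succ n ih =>
    intro s hn ho hacts C
    cases s with
    | nd l =>
      rw [PLE_nd, PMiss_nd]
      have hmenuU : (l.map Prod.fst).toFinset ⊆ U := by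
        intro b hb
        have h1 : b ∈ acts (Proc.nd l) := menu_subset_acts (Proc.nd l) hb
        have h2 := hacts h1
        rcases Finset.mem_insert.mp h2 with rfl | h3
        · exact absurd (List.mem_toFinset.mp hb) (NoOmega_menu ho)
        · exact h3
      by_cases hsub : (l.map Prod.fst).toFinset ⊆ C
      · rw [if_pos hsub, if_pos]
        rw [Finset.eq_empty_iff_forall_notMem]
        intro b hb
        rw [Finset.mem_inter, Finset.mem_sdiff] at hb
        exact hb.2.2 (hsub hb.1)
      · rw [if_neg hsub, if_neg]
        intro hc
        apply hsub
        intro b hb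
        by_contra hbC
        have : b ∈ (l.map Prod.fst).toFinset ∩ (U \ C) :=
          Finset.mem_inter.mpr ⟨hb, Finset.mem_sdiff.mpr ⟨hmenuU hb, hbC⟩⟩
        rw [hc] at this
        cases this
    | pr l =>
      rw [PLE_pr, PMiss_pr]
      apply list_sum_map_congr
      intro x hx
      have hsz : sizeOf x.2 ≤ n := by
        have := List.sizeOf_lt_of_mem hx
        obtain ⟨a, p⟩ := x
        simp at this hn ⊢
        omega
      rw [ih x.2 hsz (NoOmega_children_pr ho x hx) ((acts_child_pr hx).trans hacts) C]

theorem P1_moebius : ∀ n (s : Proc A), sizeOf s ≤ n → ∀ M₀ : Finset A,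
    P1 s M₀ = ∑ C ∈ M₀.powerset, (-1:ℝ)^((M₀ \ C).card) * PLE s C := by
  intro n
  induction n with
  | zero => intro s h; cases s <;> simp at h
  | succ n ih =>
    intro s hn M₀
    cases s with
    | nd l =>
      rw [P1_nd]
      have hcalc : ∀ C ∈ M₀.powerset, (-1:ℝ)^((M₀ \ C).card) * PLE (Proc.nd l) C
          = (if (l.map Prod.fst).toFinset ⊆ C then (-1:ℝ)^((M₀ \ C).card) else 0) := by
        intro C _
        rw [PLE_nd]
        split <;> simp
      rw [Finset.sum_congr rfl hcalc]
      rw [Finset.sum_nbij' (i := fun C => M₀ \ C) (j := fun D => M₀ \ D)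
        (fun C hC => Finset.mem_powerset.mpr (Finset.sdiff_subset))
        (fun D hD => Finset.mem_powerset.mpr (Finset.sdiff_subset))
        (fun C hC => Finset.sdiff_sdiff_eq_self (Finset.mem_powerset.mp hC))
        (fun D hD => Finset.sdiff_sdiff_eq_self (Finset.mem_powerset.mp hD))
        (g := fun D => if (l.map Prod.fst).toFinset ⊆ M₀ \ D then (-1:ℝ)^((M₀ \ (M₀ \ D)).card) else 0)
        (fun C hC => by
          show (if (l.map Prod.fst).toFinset ⊆ C then (-1:ℝ)^((M₀ \ C).card) else 0)
              = (if (l.map Prod.fst).toFinset ⊆ M₀ \ (M₀ \ C) then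
                  (-1:ℝ)^((M₀ \ (M₀ \ (M₀ \ C))).card) else 0)
          rw [Finset.sdiff_sdiff_eq_self (Finset.mem_powerset.mp hC)])]
      have hcalc2 : ∀ D ∈ M₀.powerset,
          (if (l.map Prod.fst).toFinset ⊆ M₀ \ D then (-1:ℝ)^((M₀ \ (M₀ \ D)).card) else 0)
          = (if (l.map Prod.fst).toFinset ⊆ M₀ \ D then (-1:ℝ)^(D.card) else 0) := by
        intro D hD
        rw [Finset.sdiff_sdiff_eq_self (Finset.mem_powerset.mp hD)]
      rw [Finset.sum_congr rfl hcalc2]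
      by_cases hM : (l.map Prod.fst).toFinset ⊆ M₀
      · have hcond : ∀ D ∈ M₀.powerset,
            ((l.map Prod.fst).toFinset ⊆ M₀ \ D ↔ D ⊆ M₀ \ (l.map Prod.fst).toFinset) := by
          intro D hD
          constructor
          · intro h b hb
            refine Finset.mem_sdiff.mpr ⟨Finset.mem_powerset.mp hD hb, fun hbm => ?_⟩
            exact (Finset.mem_sdiff.mp (h hbm)).2 hb
          · intro h b hb
            refine Finset.mem_sdiff.mpr ⟨hM hb, fun hbD => ?_⟩
            exact (Finset.mem_sdiff.mp (h hbD)).2 hb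
        have hcalc3 : ∀ D ∈ M₀.powerset,
            (if (l.map Prod.fst).toFinset ⊆ M₀ \ D then (-1:ℝ)^(D.card) else 0)
            = (if D ⊆ M₀ \ (l.map Prod.fst).toFinset then (-1:ℝ)^(D.card) else 0) := by
          intro D hD
          by_cases h : (l.map Prod.fst).toFinset ⊆ M₀ \ D
          · rw [if_pos h, if_pos ((hcond D hD).mp h)]
          · rw [if_neg h, if_neg (fun hc => h ((hcond D hD).mpr hc))]
        rw [Finset.sum_congr rfl hcalc3]
        rw [← Finset.sum_subset (Finset.powerset_mono.mpr Finset.sdiff_subset)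
          (fun D hD hD' => by
            rw [if_neg]
            exact fun hc => hD' (Finset.mem_powerset.mpr hc))]
        have hcalc4 : ∀ D ∈ (M₀ \ (l.map Prod.fst).toFinset).powerset,
            (if D ⊆ M₀ \ (l.map Prod.fst).toFinset then (-1:ℝ)^(D.card) else 0)
            = (-1:ℝ)^(D.card) := by
          intro D hD
          rw [if_pos (Finset.mem_powerset.mp hD)]
        rw [Finset.sum_congr rfl hcalc4, sum_powerset_neg_one]
        by_cases heq : (l.map Prod.fst).toFinset = M₀
        · rw [if_pos heq, if_pos]
          rw [Finset.sdiff_eq_empty_iff_subset]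
          rw [heq]
        · rw [if_neg heq, if_neg]
          intro hc
          rw [Finset.sdiff_eq_empty_iff_subset] at hc
          exact heq (Finset.Subset.antisymm hM hc)
      · have hz : ∀ D ∈ M₀.powerset,
            (if (l.map Prod.fst).toFinset ⊆ M₀ \ D then (-1:ℝ)^(D.card) else 0) = 0 := by
          intro D hD
          rw [if_neg]
          intro hc
          exact hM (hc.trans Finset.sdiff_subset)
        rw [Finset.sum_congr rfl hz, Finset.sum_const_zero, if_neg]
        intro hc
        exact hM (hc ▸ Finset.Subset.refl M₀)
    | pr l =>
      rw [P1_pr]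
      have h1 : ∀ x ∈ l, (fun x : ℝ × Proc A => x.1 * P1 x.2 M₀) x
          = (fun x : ℝ × Proc A =>
              ∑ C ∈ M₀.powerset, (-1:ℝ)^((M₀ \ C).card) * (x.1 * PLE x.2 C)) x := by
        intro x hx
        have hsz : sizeOf x.2 ≤ n := by
          have := List.sizeOf_lt_of_mem hx
          obtain ⟨a, p⟩ := x
          simp at this hn ⊢
          omega
        simp only
        rw [ih x.2 hsz M₀, Finset.mul_sum]
        exact Finset.sum_congr rfl (fun C _ => by ring)
      rw [list_sum_map_congr h1, list_sum_finset_sum]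
      apply Finset.sum_congr rfl
      intro C _
      rw [PLE_pr, ← List.sum_map_mul_left]

theorem base (ω : A) (s t : Proc A) (hs : WF s) (ht : WF t)
    (hos : NoOmega ω s) (hot : NoOmega ω t)
    (M₀ : Finset A) (hP : P1 s M₀ ≠ P1 t M₀) :
    ∃ T : Proc A, WF T ∧ NoProb T ∧
      ∃ r r' : RF A, ResRel ω s T r ∧ ResRel ω t T r' ∧ r ≠ r' := by
  by_contra hno
  push_neg at hno
  have hPHit : ∀ N : Finset A, ω ∉ N → PHit s N = PHit t N := by
    intro N hN
    exact algR_injective (hno (hitT ω N) (hitT_WF ω N) (hitT_NoProb ω N) _ _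
      (resrel_hit ω N hN (sizeOf s) s le_rfl) (resrel_hit ω N hN (sizeOf t) t le_rfl))
  set U : Finset A := (acts s ∪ acts t).erase ω with hU
  have hactss : acts s ⊆ insert ω U := by
    intro x hx
    by_cases hxω : x = ω
    · exact Finset.mem_insert.mpr (Or.inl hxω)
    · exact Finset.mem_insert.mpr (Or.inr (Finset.mem_erase.mpr ⟨hxω, Finset.mem_union_left _ hx⟩))
  have hactst : acts t ⊆ insert ω U := by
    intro x hx
    by_cases hxω : x = ω
    · exact Finset.mem_insert.mpr (Or.inl hxω)
    · exact Finset.mem_insert.mpr (Or.inr (Finset.mem_erase.mpr ⟨hxω, Finset.mem_union_right _ hx⟩))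
  have hPLE : ∀ C, PLE s C = PLE t C := by
    intro C
    rw [PLE_eq_PMiss ω U (sizeOf s) s le_rfl hos hactss C,
      PLE_eq_PMiss ω U (sizeOf t) t le_rfl hot hactst C]
    have hωUC : ω ∉ U \ C := fun hc => (Finset.mem_erase.mp (Finset.mem_sdiff.mp hc).1).1 rfl
    have h1 := PHit_add_PMiss (sizeOf s) s le_rfl hs (U \ C)
    have h2 := PHit_add_PMiss (sizeOf t) t le_rfl ht (U \ C)
    have h3 := hPHit (U \ C) hωUC
    linarith
  apply hP
  rw [P1_moebius (sizeOf s) s le_rfl M₀, P1_moebius (sizeOf t) t le_rfl M₀]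
  exact Finset.sum_congr rfl (fun C _ => by rw [hPLE C])

end PRTAux5

namespace PRTAux6
set_option linter.unusedSectionVars false
open Proc PRTAux PRTAux2 PRTAux3 PRTAux4 PRTAux5
open scoped Classical

variable {A : Type} [DecidableEq A]

theorem binom_int (n : ℕ) :
    ∑ j ∈ Finset.range (n+1), (-1:ℤ)^j * ((n+1).choose (j+1)) = 1 := by
  have h := Int.alternating_sum_range_choose (n := n+1)
  rw [if_neg (Nat.succ_ne_zero n)] at h
  rw [Finset.sum_range_succ'] at h
  simp only [pow_zero, one_mul, Nat.choose_zero_right, Nat.cast_one] at h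
  have h2 : ∀ j, (-1:ℤ)^(j+1) * ((n+1).choose (j+1)) = -((-1)^j * ((n+1).choose (j+1))) := by
    intro j
    rw [pow_succ]
    ring
  rw [Finset.sum_congr rfl (fun j _ => h2 j), Finset.sum_neg_distrib] at h
  linarith

theorem binom_real (n : ℕ) :
    ∑ j ∈ Finset.range (n+1), (n.choose j : ℝ) * ((-1)^j / ((j:ℝ)+1)) = 1/((n:ℝ)+1) := by
  have hn : ((n:ℝ)+1) ≠ 0 := by positivity
  rw [eq_div_iff hn]
  have hstep : (∑ j ∈ Finset.range (n+1), (n.choose j : ℝ) * ((-1)^j / ((j:ℝ)+1))) * ((n:ℝ)+1)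
      = ∑ j ∈ Finset.range (n+1), (-1:ℝ)^j * (((n+1).choose (j+1) : ℕ) : ℝ) := by
    rw [Finset.sum_mul]
    apply Finset.sum_congr rfl
    intro j _
    have hj : ((j:ℝ)+1) ≠ 0 := by positivity
    have hch : ((n:ℝ)+1) * (n.choose j : ℝ) = (((n+1).choose (j+1) : ℕ) : ℝ) * ((j:ℝ)+1) := by
      exact_mod_cast congrArg (Nat.cast (R := ℝ)) (Nat.add_one_mul_choose_eq n j)
    have expand : (n.choose j : ℝ) * ((-1)^j / ((j:ℝ)+1)) * ((n:ℝ)+1)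
        = (-1:ℝ)^j * ((((n:ℝ)+1) * (n.choose j : ℝ)) / ((j:ℝ)+1)) := by
      ring
    rw [expand, hch, mul_div_cancel_right₀ _ hj]
  rw [hstep]
  exact_mod_cast congrArg (fun z : ℤ => (z : ℝ)) (binom_int n)

theorem sum_powerset_card_fun {α : Type*} [DecidableEq α] (B : Finset α) (f : ℕ → ℝ) :
    ∑ K ∈ B.powerset, f K.card
      = ∑ j ∈ Finset.range (B.card + 1), (B.card.choose j : ℝ) * f j := by
  rw [Finset.sum_powerset]
  apply Finset.sum_congr rfl
  intro j hj
  have hc : ∀ K ∈ Finset.powersetCard j B, f K.card = f j := fun K hK => by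
    rw [(Finset.mem_powersetCard.mp hK).2]
  rw [Finset.sum_congr rfl hc, Finset.sum_const, Finset.card_powersetCard, nsmul_eq_mul]

theorem real_phi_ne {α : Type*} [DecidableEq α] (B : Finset α) :
    ∑ K ∈ B.powerset, (-1:ℝ)^K.card * ∏ K' ∈ B.powerset.erase K, ((K'.card:ℝ)+1) ≠ 0 := by
  have hQpos : (0:ℝ) < ∏ K' ∈ B.powerset, ((K'.card:ℝ)+1) :=
    Finset.prod_pos (fun K' _ => by positivity)
  have hterm : ∀ K ∈ B.powerset,
      (-1:ℝ)^K.card * ∏ K' ∈ B.powerset.erase K, ((K'.card:ℝ)+1)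
      = (∏ K' ∈ B.powerset, ((K'.card:ℝ)+1)) * ((-1)^K.card / ((K.card:ℝ)+1)) := by
    intro K hK
    rw [← Finset.mul_prod_erase _ _ hK]
    have hKc : ((K.card:ℝ)+1) ≠ 0 := by positivity
    field_simp
  rw [Finset.sum_congr rfl hterm, ← Finset.mul_sum]
  apply mul_ne_zero (ne_of_gt hQpos)
  have hbig : ∑ K ∈ B.powerset, ((-1:ℝ)^K.card / ((K.card:ℝ)+1)) = 1/((B.card:ℝ)+1) := by
    rw [sum_powerset_card_fun B (fun j => (-1:ℝ)^j / ((j:ℝ)+1))]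
    exact binom_real B.card
  rw [hbig]
  positivity

theorem phi_ne (a₁ : A) (U B : Finset A) (hBU : B ⊆ U) (ha : a₁ ∉ U) :
    ∑ K ∈ B.powerset, (-1:RF A)^K.card * (RVar a₁ / ∑ b ∈ insert a₁ K, RVar b) ≠ 0 := by
  have hD : ∀ K : Finset A, (∑ b ∈ insert a₁ K, RVar (A := A) b)
      = algP A (∑ b ∈ insert a₁ K, MvPolynomial.X b) := fun K => by rw [map_sum]; rfl
  have hDne : ∀ K : Finset A, algP A (∑ b ∈ insert a₁ K, MvPolynomial.X b) ≠ 0 := by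
    intro K
    rw [← hD]
    exact sum_rvar_ne_zero ⟨a₁, Finset.mem_insert_self _ _⟩
  intro h0
  have h1 : ∑ K ∈ B.powerset, (-1:RF A)^K.card *
      (RVar a₁ * ∏ K' ∈ B.powerset.erase K, algP A (∑ b ∈ insert a₁ K', MvPolynomial.X b)) = 0 := by
    have h2 := congrArg (fun z => z * ∏ K' ∈ B.powerset,
      algP A (∑ b ∈ insert a₁ K', MvPolynomial.X b)) h0
    simp only [zero_mul] at h2
    rw [Finset.sum_mul] at h2
    rw [← h2]
    apply Finset.sum_congr rfl
    intro K hK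
    rw [hD, ← Finset.mul_prod_erase _ _ hK, mul_assoc, ← mul_assoc (RVar a₁ / _) _ _,
      div_mul_cancel₀ _ (hDne K)]
  have h3 : algP A (∑ K ∈ B.powerset, (-1:MvPolynomial A ℝ)^K.card *
      (MvPolynomial.X a₁ * ∏ K' ∈ B.powerset.erase K,
        (∑ b ∈ insert a₁ K', MvPolynomial.X b))) = 0 := by
    rw [map_sum, ← h1]
    apply Finset.sum_congr rfl
    intro K hK
    rw [map_mul, map_mul, map_pow, map_neg, map_one, map_prod]
    rfl
  have h4 : (∑ K ∈ B.powerset, (-1:MvPolynomial A ℝ)^K.card *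
      (MvPolynomial.X a₁ * ∏ K' ∈ B.powerset.erase K,
        (∑ b ∈ insert a₁ K', MvPolynomial.X b))) = 0 :=
    algP_injective (by rw [h3, map_zero])
  have h5 := congrArg (ev1 A) h4
  rw [map_sum, map_zero] at h5
  have h6 : ∀ K ∈ B.powerset, ev1 A ((-1:MvPolynomial A ℝ)^K.card *
      (MvPolynomial.X a₁ * ∏ K' ∈ B.powerset.erase K,
        (∑ b ∈ insert a₁ K', MvPolynomial.X b)))
      = (-1:ℝ)^K.card * ∏ K' ∈ B.powerset.erase K, ((K'.card:ℝ)+1) := by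
    intro K hK
    rw [map_mul, map_mul, map_pow, map_neg, map_one, map_prod, ev1_X, one_mul]
    congr 1
    apply Finset.prod_congr rfl
    intro K' hK'
    have hK'B : K' ⊆ B := Finset.mem_powerset.mp (Finset.mem_of_mem_erase hK')
    exact ev1_sum_insert a₁ K' (fun hc => ha (hBU (hK'B hc)))
  rw [Finset.sum_congr rfl h6] at h5
  exact real_phi_ne B h5

noncomputable def eAux (𝓜 : Finset (Finset A)) (d : Finset A → RF A) (a₁ : A)
    (B K : Finset A) : RF A :=
  ∑ M ∈ 𝓜.filter (fun M => (M \ {a₁}) ∩ B = K), d M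

theorem key (a₁ : A) (U : Finset A) (ha : a₁ ∉ U) (𝓜 : Finset (Finset A))
    (h1 : ∀ M ∈ 𝓜, a₁ ∈ M) (h2 : ∀ M ∈ 𝓜, M \ {a₁} ⊆ U)
    (d : Finset A → RF A)
    (heq : ∀ B ⊆ U, ∑ M ∈ 𝓜, (RVar a₁ / ∑ b ∈ M ∩ insert a₁ B, RVar b) * d M = 0) :
    ∀ M ∈ 𝓜, d M = 0 := by
  have hconv : ∀ B ⊆ U, ∀ M ∈ 𝓜, M ∩ insert a₁ B = insert a₁ ((M \ {a₁}) ∩ B) := by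
    intro B hB M hM
    ext b
    simp only [Finset.mem_inter, Finset.mem_insert, Finset.mem_sdiff, Finset.mem_singleton]
    constructor
    · rintro ⟨hbM, rfl | hbB⟩
      · exact Or.inl rfl
      · by_cases hb : b = a₁
        · exact Or.inl hb
        · exact Or.inr ⟨⟨hbM, hb⟩, hbB⟩
    · rintro (rfl | ⟨⟨hbM, _⟩, hbB⟩)
      · exact ⟨h1 M hM, Or.inl rfl⟩
      · exact ⟨hbM, Or.inr hbB⟩
  have heq' : ∀ B ⊆ U, ∑ M ∈ 𝓜,
      (RVar a₁ / ∑ b ∈ insert a₁ ((M \ {a₁}) ∩ B), RVar b) * d M = 0 := by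
    intro B hB
    rw [← heq B hB]
    exact (Finset.sum_congr rfl (fun M hM => by rw [hconv B hB M hM])).symm
  have tau : ∀ n : ℕ, ∀ B, B ⊆ U → B.card = n →
      ∑ M ∈ 𝓜.filter (fun M => (M \ {a₁}) ∩ B = ∅), d M = 0 := by
    intro n
    induction n using Nat.strong_induction_on with | _ n IH =>
    intro B hBU hBcard
    -- sums of e over sub-powersets vanish
    have hgsum : ∀ K ∈ B.powerset, K ≠ ∅ → ∑ K' ∈ K.powerset, eAux 𝓜 d a₁ B K' = 0 := by
      intro K hK hKne
      have hKB : K ⊆ B := Finset.mem_powerset.mp hK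
      have hsets : ∀ K' ∈ K.powerset,
          𝓜.filter (fun M => (M \ {a₁}) ∩ B = K')
          = (𝓜.filter (fun M => (M \ {a₁}) ∩ B ⊆ K)).filter
              (fun M => (M \ {a₁}) ∩ B = K') := by
        intro K' hK'
        rw [Finset.filter_filter]
        apply Finset.filter_congr
        intro M _
        constructor
        · intro h
          exact ⟨h ▸ Finset.mem_powerset.mp hK', h⟩
        · exact And.right
      have hstep1 : ∑ K' ∈ K.powerset, eAux 𝓜 d a₁ B K'
          = ∑ M ∈ 𝓜.filter (fun M => (M \ {a₁}) ∩ B ⊆ K), d M := by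
        rw [← Finset.sum_fiberwise_of_maps_to (g := fun M => (M \ {a₁}) ∩ B)
          (t := K.powerset)
          (fun M hM => Finset.mem_powerset.mpr ((Finset.mem_filter.mp hM).2)) d]
        apply Finset.sum_congr rfl
        intro K' hK'
        rw [eAux, hsets K' hK']
      have hpred : ∀ M, ((M \ {a₁}) ∩ B ⊆ K ↔ (M \ {a₁}) ∩ (B \ K) = ∅) := by
        intro M
        constructor
        · intro h
          rw [Finset.eq_empty_iff_forall_notMem]
          intro b hb
          simp only [Finset.mem_inter, Finset.mem_sdiff] at hb
          exact hb.2.2 (h (Finset.mem_inter.mpr ⟨Finset.mem_sdiff.mpr hb.1, hb.2.1⟩))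
        · intro h b hb
          rw [Finset.mem_inter] at hb
          by_contra hbK
          have hmem : b ∈ (M \ {a₁}) ∩ (B \ K) :=
            Finset.mem_inter.mpr ⟨hb.1, Finset.mem_sdiff.mpr ⟨hb.2, hbK⟩⟩
          rw [h] at hmem
          cases hmem
      rw [hstep1, Finset.filter_congr (fun M _ => hpred M)]
      have hcard : (B \ K).card < n := by
        rw [Finset.card_sdiff_of_subset hKB]
        have hKpos : 0 < K.card := Finset.card_pos.mpr (Finset.nonempty_iff_ne_empty.mpr hKne)
        have hKle : K.card ≤ B.card := Finset.card_le_card hKB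
        omega
      exact IH (B \ K).card (hBcard ▸ hcard) (B \ K) (Finset.sdiff_subset.trans hBU) rfl
    -- e K = (-1)^|K| e ∅
    have herel : ∀ m : ℕ, ∀ K ∈ B.powerset, K.card = m →
        eAux 𝓜 d a₁ B K = (-1:RF A)^K.card * eAux 𝓜 d a₁ B ∅ := by
      intro m
      induction m using Nat.strong_induction_on with | _ m IHm =>
      intro K hK hKcard
      by_cases hKne : K = ∅
      · subst hKne; simp
      · have h0 := hgsum K hK hKne
        rw [← Finset.add_sum_erase _ _ (Finset.mem_powerset_self K)] at h0
        have hrest : ∑ K' ∈ K.powerset.erase K, eAux 𝓜 d a₁ B K'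
            = (∑ K' ∈ K.powerset.erase K, (-1:RF A)^K'.card) * eAux 𝓜 d a₁ B ∅ := by
          rw [Finset.sum_mul]
          apply Finset.sum_congr rfl
          intro K' hK'
          have hK'K : K' ⊆ K := Finset.mem_powerset.mp (Finset.mem_of_mem_erase hK')
          have hK'ne : K' ≠ K := Finset.ne_of_mem_erase hK'
          have hlt : K'.card < m := by
            rw [← hKcard]
            exact Finset.card_lt_card (Finset.ssubset_iff_subset_ne.mpr ⟨hK'K, hK'ne⟩)
          exact IHm K'.card hlt K'
            (Finset.mem_powerset.mpr (hK'K.trans (Finset.mem_powerset.mp hK))) rfl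
        have hps : ∑ K' ∈ K.powerset.erase K, (-1:RF A)^K'.card = -(-1:RF A)^K.card := by
          have h5 := sum_powerset_neg_one (R := RF A) K
          rw [if_neg hKne, ← Finset.add_sum_erase _ _ (Finset.mem_powerset_self K)] at h5
          linear_combination h5
        rw [hrest, hps] at h0
        linear_combination h0
    -- the main equation, fiberwise
    have hfib : ∑ K ∈ B.powerset,
        (RVar a₁ / ∑ b ∈ insert a₁ K, RVar b) * eAux 𝓜 d a₁ B K
        = ∑ M ∈ 𝓜, (RVar a₁ / ∑ b ∈ insert a₁ ((M \ {a₁}) ∩ B), RVar b) * d M := by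
      rw [← Finset.sum_fiberwise_of_maps_to (g := fun M => (M \ {a₁}) ∩ B) (t := B.powerset)
        (fun M _ => Finset.mem_powerset.mpr Finset.inter_subset_right)
        (fun M => (RVar a₁ / ∑ b ∈ insert a₁ ((M \ {a₁}) ∩ B), RVar b) * d M)]
      apply Finset.sum_congr rfl
      intro K _
      rw [eAux, Finset.mul_sum]
      apply Finset.sum_congr rfl
      intro M hM
      rw [(Finset.mem_filter.mp hM).2]
    have hmain : ∑ K ∈ B.powerset,
        (RVar a₁ / ∑ b ∈ insert a₁ K, RVar b) * eAux 𝓜 d a₁ B K = 0 := by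
      rw [hfib]
      exact heq' B hBU
    have hmain2 : (∑ K ∈ B.powerset,
        (-1:RF A)^K.card * (RVar a₁ / ∑ b ∈ insert a₁ K, RVar b)) * eAux 𝓜 d a₁ B ∅ = 0 := by
      rw [Finset.sum_mul, ← hmain]
      apply Finset.sum_congr rfl
      intro K hK
      rw [herel K.card K hK rfl]
      ring
    have he0 : eAux 𝓜 d a₁ B ∅ = 0 := by
      rcases mul_eq_zero.mp hmain2 with h | h
      · exact absurd h (phi_ne a₁ U B hBU ha)
      · exact h
    exact he0
  -- recover the individual coefficients
  have hins : ∀ M ∈ 𝓜, insert a₁ (M \ {a₁}) = M := by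
    intro M hM
    ext b
    simp only [Finset.mem_insert, Finset.mem_sdiff, Finset.mem_singleton]
    constructor
    · rintro (rfl | ⟨hb, _⟩)
      · exact h1 M hM
      · exact hb
    · intro hb
      by_cases hba : b = a₁
      · exact Or.inl hba
      · exact Or.inr ⟨hb, hba⟩
  have hfinal : ∀ m : ℕ, ∀ M₀ ∈ 𝓜, (M₀ \ {a₁}).card = m → d M₀ = 0 := by
    intro m
    induction m using Nat.strong_induction_on with | _ m IHm =>
    intro M₀ hM₀ hMcard
    have htau := tau (U \ (M₀ \ {a₁})).card (U \ (M₀ \ {a₁})) Finset.sdiff_subset rfl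
    have hpred : ∀ M ∈ 𝓜,
        ((M \ {a₁}) ∩ (U \ (M₀ \ {a₁})) = ∅ ↔ (M \ {a₁}) ⊆ (M₀ \ {a₁})) := by
      intro M hM
      constructor
      · intro h b hb
        by_contra hc
        have hbU : b ∈ U := h2 M hM hb
        have hmem : b ∈ (M \ {a₁}) ∩ (U \ (M₀ \ {a₁})) :=
          Finset.mem_inter.mpr ⟨hb, Finset.mem_sdiff.mpr ⟨hbU, hc⟩⟩
        rw [h] at hmem
        cases hmem
      · intro h
        rw [Finset.eq_empty_iff_forall_notMem]
        intro b hb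
        simp only [Finset.mem_inter, Finset.mem_sdiff] at hb
        exact hb.2.2 (Finset.mem_sdiff.mp (h (Finset.mem_sdiff.mpr hb.1)))
    rw [Finset.filter_congr hpred] at htau
    have hM₀mem : M₀ ∈ 𝓜.filter (fun M => (M \ {a₁}) ⊆ (M₀ \ {a₁})) :=
      Finset.mem_filter.mpr ⟨hM₀, Finset.Subset.refl _⟩
    rw [← Finset.add_sum_erase _ _ hM₀mem] at htau
    have hrest0 : ∑ M ∈ (𝓜.filter (fun M => (M \ {a₁}) ⊆ (M₀ \ {a₁}))).erase M₀, d M = 0 := by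
      apply Finset.sum_eq_zero
      intro M hM
      have hMmem := Finset.mem_of_mem_erase hM
      have hMne := Finset.ne_of_mem_erase hM
      have hM𝓜 : M ∈ 𝓜 := (Finset.mem_filter.mp hMmem).1
      have hsub : (M \ {a₁}) ⊆ (M₀ \ {a₁}) := (Finset.mem_filter.mp hMmem).2
      have hssub : (M \ {a₁}) ≠ (M₀ \ {a₁}) := by
        intro hc
        apply hMne
        rw [← hins M hM𝓜, ← hins M₀ hM₀, hc]
      have hlt : (M \ {a₁}).card < m := by
        rw [← hMcard]
        exact Finset.card_lt_card (Finset.ssubset_iff_subset_ne.mpr ⟨hsub, hssub⟩)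
      exact IHm _ hlt M hM𝓜 rfl
    rw [hrest0, add_zero] at htau
    exact htau
  intro M hM
  exact hfinal (M \ {a₁}).card M hM rfl

end PRTAux6

namespace PRTAux7
set_option linter.unusedSectionVars false
open Proc PRTAux PRTAux2 PRTAux3 PRTAux4 PRTAux5 PRTAux6
open scoped Classical

variable {A : Type} [DecidableEq A]

noncomputable def liftT (a₁ : A) (T' : Proc A) (B : Finset A) : Proc A :=
  Proc.nd ((a₁, T') :: B.toList.map (fun b => (b, Proc.nd [])))

theorem liftT_fst (a₁ : A) (T' : Proc A) (B : Finset A) :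
    (((a₁, T') :: B.toList.map (fun b => (b, Proc.nd ([] : List (A × Proc A))))).map
      Prod.fst) = a₁ :: B.toList := by
  rw [List.map_cons, List.map_map]
  congr 1
  show List.map (fun a => a) B.toList = B.toList
  exact List.map_id' B.toList

theorem liftT_menu (a₁ : A) (T' : Proc A) (B : Finset A) :
    (((a₁, T') :: B.toList.map (fun b => (b, Proc.nd ([] : List (A × Proc A))))).map
      Prod.fst).toFinset = insert a₁ B := by
  rw [liftT_fst, List.toFinset_cons, Finset.toList_toFinset]

theorem step_liftT_self (a₁ : A) (T' : Proc A) (B : Finset A) :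
    step (liftT a₁ T' B) a₁ = some T' := by
  show (((a₁, T') :: B.toList.map (fun b => (b, Proc.nd []))).find?
    (fun x => x.1 = a₁)).map Prod.snd = some T'
  rw [List.find?_cons_of_pos (p := fun x : A × Proc A => decide (x.1 = a₁)) (a := (a₁, T')) (by simp)]
  rfl

theorem step_liftT_other (a₁ : A) (T' : Proc A) (B : Finset A) {b : A} (hne : b ≠ a₁)
    {q : Proc A} (h : step (liftT a₁ T' B) b = some q) : q = Proc.nd [] := by
  obtain ⟨x, hx, hx1, hx2⟩ := step_mem h
  rcases List.mem_cons.mp hx with rfl | hx'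
  · exact absurd hx1 (by simpa using hne.symm)
  · obtain ⟨c, _, rfl⟩ := List.mem_map.mp hx'
    rw [← hx2]

theorem liftT_WF (a₁ : A) (T' : Proc A) (B : Finset A) (ha : a₁ ∉ B) (hT : WF T') :
    WF (liftT a₁ T' B) := by
  refine WF.nd _ ?_ ?_
  · rw [liftT_fst]
    exact List.Nodup.cons (by simpa using ha) B.nodup_toList
  · rintro x hx
    rcases List.mem_cons.mp hx with rfl | hx'
    · exact hT
    · obtain ⟨c, _, rfl⟩ := List.mem_map.mp hx'
      exact WF.nd [] (by simp) (by simp)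

theorem liftT_NoProb (a₁ : A) (T' : Proc A) (B : Finset A) (hT : NoProb T') :
    NoProb (liftT a₁ T' B) := by
  refine NoProb.nd _ ?_
  rintro x hx
  rcases List.mem_cons.mp hx with rfl | hx'
  · exact hT
  · obtain ⟨c, _, rfl⟩ := List.mem_map.mp hx'
    exact NoProb.nd [] (by simp)

theorem child_res (ω a₁ : A) (T' : Proc A) (B : Finset A) (hωB : ω ∉ B) (hωa : ω ≠ a₁)
    (lc : List (A × Proc A)) (hωc : ω ∉ lc.map Prod.fst)
    (u : RF A) (hu : ∀ q, step (Proc.nd lc) a₁ = some q → ResRel ω q T' u) :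
    ResRel ω (Proc.nd lc) (liftT a₁ T' B)
      (if a₁ ∈ (lc.map Prod.fst).toFinset then
        (RVar a₁ / ∑ b ∈ (lc.map Prod.fst).toFinset ∩ insert a₁ B, RVar b) * u else 0) := by
  refine rcast (ResRel.sync lc ((a₁, T') :: B.toList.map (fun b => (b, Proc.nd [])))
    (fun a => if a = a₁ then u else 0) ?_ ?_) ?_
  · rw [liftT_fst]
    simp only [List.mem_cons]
    push_neg
    exact ⟨hωa, by simpa using hωB⟩
  · intro a ha sa Ta hsa hTa
    show ResRel ω sa Ta (if a = a₁ then u else 0)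
    by_cases haa : a = a₁
    · rw [if_pos haa]
      rw [haa] at hTa hsa
      have h1 : step (Proc.nd ((a₁, T') :: B.toList.map (fun b => (b, Proc.nd [])))) a₁
          = some T' := step_liftT_self a₁ T' B
      rw [h1] at hTa
      exact (Option.some.inj hTa) ▸ hu sa hsa
    · rw [if_neg haa]
      have hTT : Ta = Proc.nd [] := step_liftT_other a₁ T' B haa hTa
      rw [hTT]
      exact resrel_dead ω (sizeOf sa) sa le_rfl
  · rw [liftT_menu]
    have hsplit : ∀ a ∈ (lc.map Prod.fst).toFinset ∩ insert a₁ B,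
        (RVar a / ∑ b ∈ (lc.map Prod.fst).toFinset ∩ insert a₁ B, RVar b) *
          (if a = a₁ then u else 0)
        = (if a = a₁ then
            (RVar a / ∑ b ∈ (lc.map Prod.fst).toFinset ∩ insert a₁ B, RVar b) * u else 0) := by
      intro a _
      by_cases haa : a = a₁
      · rw [if_pos haa, if_pos haa]
      · rw [if_neg haa, if_neg haa, mul_zero]
    rw [Finset.sum_congr rfl hsplit,
      Finset.sum_ite_eq' ((lc.map Prod.fst).toFinset ∩ insert a₁ B) a₁
        (fun a => (RVar a / ∑ b ∈ (lc.map Prod.fst).toFinset ∩ insert a₁ B, RVar b) * u)]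
    by_cases hmem : a₁ ∈ (lc.map Prod.fst).toFinset
    · rw [if_pos (Finset.mem_inter.mpr ⟨hmem, Finset.mem_insert_self _ _⟩), if_pos hmem]
    · rw [if_neg (fun hc => hmem (Finset.mem_inter.mp hc).1), if_neg hmem]

end PRTAux7

namespace PRTAux8
set_option linter.unusedSectionVars false
set_option maxHeartbeats 1000000
open Proc PRTAux PRTAux2 PRTAux3 PRTAux4 PRTAux5 PRTAux6 PRTAux7
open scoped Classical

variable {A : Type} [DecidableEq A]

noncomputable def anyV (ω : A) (q T : Proc A) : RF A :=
  Classical.choose (resrel_total ω (sizeOf q + sizeOf T) q T le_rfl)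

theorem anyV_spec (ω : A) (q T : Proc A) : ResRel ω q T (anyV ω q T) :=
  Classical.choose_spec (resrel_total ω (sizeOf q + sizeOf T) q T le_rfl)

noncomputable def uSel (rf : ℝ × Proc A → RF A) (w : ℝ) (x : ℝ × Proc A) (a₁ : A) : RF A :=
  match step x.2 a₁ with
  | none => 0
  | some (Proc.nd l0) => rf (w, Proc.nd l0)
  | some (Proc.pr l'') => (l''.map (fun y => algebraMap ℝ (RF A) y.1 * rf (w * y.1, y.2))).sum

theorem uSel_nd {rf : ℝ × Proc A → RF A} {w : ℝ} {x : ℝ × Proc A} {a₁ : A}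
    {l0 : List (A × Proc A)} (h : step x.2 a₁ = some (Proc.nd l0)) :
    uSel rf w x a₁ = rf (w, Proc.nd l0) := by
  unfold uSel
  rw [h]

theorem uSel_pr {rf : ℝ × Proc A → RF A} {w : ℝ} {x : ℝ × Proc A} {a₁ : A}
    {l'' : List (ℝ × Proc A)} (h : step x.2 a₁ = some (Proc.pr l'')) :
    uSel rf w x a₁
      = (l''.map (fun y => algebraMap ℝ (RF A) y.1 * rf (w * y.1, y.2))).sum := by
  unfold uSel
  rw [h]

noncomputable def uFull (ω : A) (rf : ℝ × Proc A → RF A) (tot : ℝ) (M₁ : Finset A)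
    (T : Proc A) (a₁ : A) (x : ℝ × Proc A) : RF A :=
  if x.2.menu = M₁ then uSel rf (x.1 / tot) x a₁
  else match step x.2 a₁ with
  | none => 0
  | some q => anyV ω q T

theorem uFull_sel {ω : A} {rf : ℝ × Proc A → RF A} {tot : ℝ} {M₁ : Finset A}
    {T : Proc A} {a₁ : A} {x : ℝ × Proc A} (hm : x.2.menu = M₁) :
    uFull ω rf tot M₁ T a₁ x = uSel rf (x.1 / tot) x a₁ := by
  unfold uFull
  rw [if_pos hm]

theorem uFull_other {ω : A} {rf : ℝ × Proc A → RF A} {tot : ℝ} {M₁ : Finset A}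
    {T : Proc A} {a₁ : A} {x : ℝ × Proc A} {q : Proc A} (hm : ¬ x.2.menu = M₁)
    (hq : step x.2 a₁ = some q) :
    uFull ω rf tot M₁ T a₁ x = anyV ω q T := by
  unfold uFull
  rw [if_neg hm, hq]

theorem side (ω a₁ : A) (M₁ : Finset A) (lT : List (A × Proc A))
    (hωT : ω ∉ lT.map Prod.fst)
    (s : Proc A) (hWF : WF s) (hNO : NoOmega ω s)
    (hpos : 0 < P1 s M₁) (ha₁ : a₁ ∈ M₁) (hωa : ω ≠ a₁)
    (r₁ : RF A) (hres : ∀ s'', after s M₁ a₁ = some s'' → ResRel ω s'' (Proc.nd lT) r₁) :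
    ∃ cs : Finset A → RF A,
      cs M₁ = algebraMap ℝ (RF A) (P1 s M₁) * r₁ ∧
      ∀ 𝓜 : Finset (Finset A), M₁ ∈ 𝓜 → (∀ M ∈ 𝓜, a₁ ∈ M) →
        (∀ M ∈ bmenus s, a₁ ∈ M → M ∈ 𝓜) →
        ∀ B : Finset A, a₁ ∉ B → ω ∉ B →
          ResRel ω s (liftT a₁ (Proc.nd lT) B)
            (∑ M ∈ 𝓜, (RVar a₁ / ∑ b ∈ M ∩ insert a₁ B, RVar b) * cs M) := by
  cases s with
  | nd l =>
    have hmenu : (l.map Prod.fst).toFinset = M₁ := P1_pos_menu hpos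
    obtain ⟨s', hs'⟩ := step_isSome_of_mem (l := l) (a := a₁)
      (by rw [← List.mem_toFinset, hmenu]; exact ha₁)
    have hres1 : ResRel ω s' (Proc.nd lT) r₁ := by
      apply hres
      rw [after_nd, if_pos hmenu]
      exact hs'
    refine ⟨fun M => if M = M₁ then r₁ else 0, ?_, ?_⟩
    · show (if M₁ = M₁ then r₁ else 0) = _
      rw [if_pos rfl, P1_nd, if_pos hmenu, map_one, one_mul]
    · intro 𝓜 hM₁𝓜 h𝓜a hcov B haB hωB
      have hchild := child_res ω a₁ (Proc.nd lT) B hωB hωa l (NoOmega_menu hNO)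
        r₁ (fun q hq => by rw [hs'] at hq; exact (Option.some.inj hq) ▸ hres1)
      refine rcast hchild ?_
      have hsum : ∑ M ∈ 𝓜, (RVar a₁ / ∑ b ∈ M ∩ insert a₁ B, RVar b) *
          (if M = M₁ then r₁ else 0)
          = (RVar a₁ / ∑ b ∈ M₁ ∩ insert a₁ B, RVar b) * r₁ := by
        have hc : ∀ M ∈ 𝓜, (RVar a₁ / ∑ b ∈ M ∩ insert a₁ B, RVar b) *
            (if M = M₁ then r₁ else 0)
            = (if M = M₁ then (RVar a₁ / ∑ b ∈ M ∩ insert a₁ B, RVar b) * r₁ else 0) := by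
          intro M _
          by_cases hMM : M = M₁
          · rw [if_pos hMM, if_pos hMM]
          · rw [if_neg hMM, if_neg hMM, mul_zero]
        rw [Finset.sum_congr rfl hc,
          Finset.sum_ite_eq' 𝓜 M₁ (fun M => (RVar a₁ / ∑ b ∈ M ∩ insert a₁ B, RVar b) * r₁),
          if_pos hM₁𝓜]
      rw [hmenu, if_pos ha₁, hsum]
  | pr l =>
    have hch := WF_weights hWF
    have htot : totL l M₁ = P1 (Proc.pr l) M₁ := totL_eq hWF M₁
    have htotpos : 0 < totL l M₁ := htot ▸ hpos
    have htotne : totL l M₁ ≠ 0 := ne_of_gt htotpos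
    have hafter : after (Proc.pr l) M₁ a₁ = some (Proc.pr (entL l M₁ a₁)) := by
      obtain ⟨s', hs', _, _⟩ := after_some (ω := ω) hWF hNO hpos ha₁
      rw [after_pr] at hs'
      by_cases h : (entL l M₁ a₁).isEmpty
      · rw [if_pos h] at hs'
        cases hs'
      · rw [after_pr, if_neg h]
    have hresE : ResRel ω (Proc.pr (entL l M₁ a₁)) (Proc.nd lT) r₁ := hres _ hafter
    obtain ⟨rf, hrf, hr₁⟩ := resrel_pr_inv hresE hωT
    -- the chosen values on selected branches
    have hu_sel : ∀ x ∈ selL l M₁, ∀ q, step x.2 a₁ = some q →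
        ResRel ω q (Proc.nd lT) (uSel rf (x.1 / totL l M₁) x a₁) := by
      intro x hx q hq
      cases q with
      | nd l0 =>
        rw [uSel_nd hq]
        have hmem : (x.1 / totL l M₁, Proc.nd l0) ∈ entL l M₁ a₁ := by
          rw [entL]
          refine List.mem_flatMap.mpr ⟨x, hx, ?_⟩
          rw [hq]
          exact List.mem_singleton.mpr rfl
        exact hrf _ hmem
      | pr l'' =>
        rw [uSel_pr hq]
        refine ResRel.probL l'' (Proc.nd lT)
          (fun y => rf (x.1 / totL l M₁ * y.1, y.2)) (by simpa [hasOmega] using hωT) ?_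
        intro y hy
        have hmem : (x.1 / totL l M₁ * y.1, y.2) ∈ entL l M₁ a₁ := by
          rw [entL]
          refine List.mem_flatMap.mpr ⟨x, hx, ?_⟩
          rw [hq]
          exact List.mem_map.mpr ⟨y, hy, rfl⟩
        exact hrf _ hmem
    -- the value identity on selected branches
    have hr₁' : r₁ = ((selL l M₁).map (fun x =>
        algebraMap ℝ (RF A) (x.1 / totL l M₁) * uSel rf (x.1 / totL l M₁) x a₁)).sum := by
      rw [hr₁, entL, list_sum_flatMap]
      apply list_sum_map_congr
      intro x hx
      obtain ⟨q, hq⟩ := selL_step_some hWF ha₁ hx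
      rw [hq]
      cases q with
      | nd l0 =>
        rw [uSel_nd hq]
        show (([(x.1 / totL l M₁, Proc.nd l0)]).map
          (fun e => algebraMap ℝ (RF A) e.1 * rf e)).sum = _
        simp
      | pr l'' =>
        rw [uSel_pr hq]
        show (((l''.map (fun y => (x.1 / totL l M₁ * y.1, y.2))).map
          (fun e => algebraMap ℝ (RF A) e.1 * rf e)).sum) = _
        rw [List.map_map, ← List.sum_map_mul_left]
        apply list_sum_map_congr
        intro y _
        show algebraMap ℝ (RF A) (x.1 / totL l M₁ * y.1) * rf (x.1 / totL l M₁ * y.1, y.2)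
          = algebraMap ℝ (RF A) (x.1 / totL l M₁) *
            (algebraMap ℝ (RF A) y.1 * rf (x.1 / totL l M₁ * y.1, y.2))
        rw [map_mul, mul_assoc]
    have hsum_sel : ((selL l M₁).map (fun x =>
        algebraMap ℝ (RF A) x.1 * uSel rf (x.1 / totL l M₁) x a₁)).sum
        = algebraMap ℝ (RF A) (totL l M₁) * r₁ := by
      rw [hr₁', ← List.sum_map_mul_left]
      apply list_sum_map_congr
      intro x hx
      show algebraMap ℝ (RF A) x.1 * uSel rf (x.1 / totL l M₁) x a₁
        = algebraMap ℝ (RF A) (totL l M₁) *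
          (algebraMap ℝ (RF A) (x.1 / totL l M₁) * uSel rf (x.1 / totL l M₁) x a₁)
      rw [← mul_assoc, ← map_mul, mul_div_cancel₀ _ htotne]
    -- spec of the full assignment
    have hufull : ∀ x ∈ l, ∀ q, step x.2 a₁ = some q →
        ResRel ω q (Proc.nd lT)
          (uFull ω rf (totL l M₁) M₁ (Proc.nd lT) a₁ x) := by
      intro x hx q hq
      by_cases hm : x.2.menu = M₁
      · rw [uFull_sel hm]
        exact hu_sel x (List.mem_filter.mpr ⟨hx, by simpa using hm⟩) q hq
      · rw [uFull_other hm hq]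
        exact anyV_spec ω q (Proc.nd lT)
    refine ⟨fun M => ((l.filter (fun x => x.2.menu = M)).map (fun x =>
      algebraMap ℝ (RF A) x.1 * uFull ω rf (totL l M₁) M₁ (Proc.nd lT) a₁ x)).sum, ?_, ?_⟩
    · -- value at M₁
      have hcongr : ∀ x ∈ l.filter (fun x => x.2.menu = M₁),
          algebraMap ℝ (RF A) x.1 * uFull ω rf (totL l M₁) M₁ (Proc.nd lT) a₁ x
          = algebraMap ℝ (RF A) x.1 * uSel rf (x.1 / totL l M₁) x a₁ := by
        intro x hx
        rw [uFull_sel (by simpa using (List.mem_filter.mp hx).2)]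
      show ((l.filter (fun x => x.2.menu = M₁)).map (fun x =>
        algebraMap ℝ (RF A) x.1 * uFull ω rf (totL l M₁) M₁ (Proc.nd lT) a₁ x)).sum
        = algebraMap ℝ (RF A) (P1 (Proc.pr l) M₁) * r₁
      rw [list_sum_map_congr hcongr]
      show ((selL l M₁).map _).sum = _
      rw [hsum_sel, htot]
    · intro 𝓜 hM₁𝓜 h𝓜a hcov B haB hωB
      refine rcast (ResRel.probL l (liftT a₁ (Proc.nd lT) B)
        (fun x => if a₁ ∈ x.2.menu then
          (RVar a₁ / ∑ b ∈ x.2.menu ∩ insert a₁ B, RVar b) *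
            uFull ω rf (totL l M₁) M₁ (Proc.nd lT) a₁ x
          else 0) ?_ ?_) ?_
      · show ¬ hasOmega ω (Proc.nd _)
        simp only [hasOmega]
        rw [liftT_fst]
        simp only [List.mem_cons]
        push_neg
        exact ⟨hωa, by simpa using hωB⟩
      · intro x hx
        obtain ⟨lx, hlx⟩ := (hch x hx).2.2
        have hc := child_res ω a₁ (Proc.nd lT) B hωB hωa lx
          (by
            have := NoOmega_children_pr hNO x hx
            rw [hlx] at this
            exact NoOmega_menu this)
          (uFull ω rf (totL l M₁) M₁ (Proc.nd lT) a₁ x)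
          (fun q hq => hufull x hx q (by rw [hlx]; exact hq))
        show ResRel ω x.2 (liftT a₁ (Proc.nd lT) B)
          (if a₁ ∈ x.2.menu then
            (RVar a₁ / ∑ b ∈ x.2.menu ∩ insert a₁ B, RVar b) *
              uFull ω rf (totL l M₁) M₁ (Proc.nd lT) a₁ x
            else 0)
        rw [hlx]
        simp only [menu]
        exact hc
      · -- regroup the list sum by menus
        have hterm : ∀ x ∈ l,
            algebraMap ℝ (RF A) x.1 * (if a₁ ∈ x.2.menu then
              (RVar a₁ / ∑ b ∈ x.2.menu ∩ insert a₁ B, RVar b) *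
                uFull ω rf (totL l M₁) M₁ (Proc.nd lT) a₁ x else 0)
            = (if a₁ ∈ x.2.menu then
                (RVar a₁ / ∑ b ∈ x.2.menu ∩ insert a₁ B, RVar b) *
                  (algebraMap ℝ (RF A) x.1 *
                    uFull ω rf (totL l M₁) M₁ (Proc.nd lT) a₁ x) else 0) := by
          intro x _
          by_cases hm : a₁ ∈ x.2.menu
          · rw [if_pos hm, if_pos hm]
            ring
          · rw [if_neg hm, if_neg hm, mul_zero]
        rw [list_sum_map_congr hterm]
        rw [list_fiber_sum l (fun x => x.2.menu) _ 𝓜 ?_]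
        · apply Finset.sum_congr rfl
          intro M hM
          have hfc : ∀ x ∈ l.filter (fun x => x.2.menu = M),
              (if a₁ ∈ x.2.menu then
                (RVar a₁ / ∑ b ∈ x.2.menu ∩ insert a₁ B, RVar b) *
                  (algebraMap ℝ (RF A) x.1 *
                    uFull ω rf (totL l M₁) M₁ (Proc.nd lT) a₁ x) else 0)
              = (RVar a₁ / ∑ b ∈ M ∩ insert a₁ B, RVar b) *
                  (algebraMap ℝ (RF A) x.1 *
                    uFull ω rf (totL l M₁) M₁ (Proc.nd lT) a₁ x) := by
            intro x hx
            have hm : x.2.menu = M := by simpa using (List.mem_filter.mp hx).2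
            rw [hm, if_pos (h𝓜a M hM)]
          rw [list_sum_map_congr hfc, List.sum_map_mul_left]
        · intro x hx
          by_cases hm : a₁ ∈ x.2.menu
          · left
            apply hcov
            · show x.2.menu ∈ bmenus (Proc.pr l)
              rw [bmenus]
              exact List.mem_toFinset.mpr (List.mem_map.mpr ⟨x, hx, rfl⟩)
            · exact hm
          · right
            rw [if_neg hm]

end PRTAux8

namespace PRTAux9
set_option linter.unusedSectionVars false
set_option maxHeartbeats 1000000
open Proc PRTAux PRTAux2 PRTAux3 PRTAux4 PRTAux5 PRTAux6 PRTAux7 PRTAux8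
open scoped Classical

variable {A : Type} [DecidableEq A]

theorem strong (ω : A) : ∀ n : ℕ, ∀ s t : Proc A, WF s → WF t → NoOmega ω s → NoOmega ω t →
    (∃ tr M, tr.length ≤ n ∧ Pn s tr M ≠ Pn t tr M) →
    ∃ T : Proc A, WF T ∧ NoProb T ∧
      ∃ r r' : RF A, ResRel ω s T r ∧ ResRel ω t T r' ∧ r ≠ r' := by
  intro n
  induction n using Nat.strong_induction_on with | _ n IH =>
  intro s t hs ht hos hot hdiff
  obtain ⟨tr, M, hlen, hne⟩ := hdiff
  by_cases hmin : ∃ tr' M', tr'.length < tr.length ∧ Pn s tr' M' ≠ Pn t tr' M'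
  · obtain ⟨tr', M', hl', hne'⟩ := hmin
    have hlt : tr'.length < n := by omega
    exact IH tr'.length hlt s t hs ht hos hot ⟨tr', M', le_rfl, hne'⟩
  · push_neg at hmin
    cases tr with
    | nil =>
      have hP : P1 s M ≠ P1 t M := fun h => hne (by simp only [Pn, h])
      exact base ω s t hs ht hos hot M hP
    | cons Ma rest =>
      obtain ⟨M₁, a₁⟩ := Ma
      have hP1 : ∀ M', P1 s M' = P1 t M' := by
        intro M'
        have h := hmin [] M' (by simp)
        simpa [Pn] using h
      have hpos : 0 < P1 s M₁ := by
        by_contra h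
        apply hne
        simp only [Pn]
        rw [if_neg h, if_neg (by rw [← hP1 M₁]; exact h)]
      have hpost : 0 < P1 t M₁ := hP1 M₁ ▸ hpos
      have ha₁ : a₁ ∈ M₁ := by
        by_contra h
        apply hne
        simp only [Pn]
        rw [if_pos hpos, if_pos hpost, after_none hs hpos h, after_none ht hpost h]
      obtain ⟨s', hs', hs'WF, hs'NO⟩ := after_some (ω := ω) hs hos hpos ha₁
      obtain ⟨t', ht', ht'WF, ht'NO⟩ := after_some (ω := ω) ht hot hpost ha₁
      have hne' : Pn s' rest M ≠ Pn t' rest M := by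
        intro h
        apply hne
        simp only [Pn]
        rw [if_pos hpos, if_pos hpost, hs', ht']
        simpa using h
      have hlen' : rest.length < n := by
        simp only [List.length_cons] at hlen
        omega
      obtain ⟨T', hT'WF, hT'NP, r₁, r₂, hr₁, hr₂, hrne⟩ :=
        IH rest.length hlen' s' t' hs'WF ht'WF hs'NO ht'NO ⟨rest, M, le_rfl, hne'⟩
      obtain ⟨lT, rfl⟩ : ∃ lT, T' = Proc.nd lT := by
        cases hT'NP with | nd l h => exact ⟨l, rfl⟩
      by_cases hωT : ω ∈ lT.map Prod.fst
      · exact absurd (by rw [resrel_omega_menu hr₁ hωT, resrel_omega_menu hr₂ hωT]) hrne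
      have hωM₁ : ω ∉ M₁ := noOmega_notmem_of_P1_pos (sizeOf s) s le_rfl hs hos M₁ hpos
      have hωa : ω ≠ a₁ := fun h => hωM₁ (h ▸ ha₁)
      by_contra hno
      push_neg at hno
      obtain ⟨cs, hcs1, hcs⟩ := side ω a₁ M₁ lT hωT s hs hos hpos ha₁ hωa r₁
        (fun s'' h => by rw [hs'] at h; exact (Option.some.inj h) ▸ hr₁)
      obtain ⟨ct, hct1, hct⟩ := side ω a₁ M₁ lT hωT t ht hot hpost ha₁ hωa r₂
        (fun t'' h => by rw [ht'] at h; exact (Option.some.inj h) ▸ hr₂)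
      set 𝓜 : Finset (Finset A) := (bmenus s ∪ bmenus t).filter (fun M' => a₁ ∈ M') with h𝓜
      set U : Finset A := (acts s ∪ acts t).erase a₁ with hU
      have hM₁𝓜 : M₁ ∈ 𝓜 := Finset.mem_filter.mpr
        ⟨Finset.mem_union_left _ (mem_bmenus_of_P1_pos hs hpos), ha₁⟩
      have h𝓜a : ∀ M' ∈ 𝓜, a₁ ∈ M' := fun M' hM' => (Finset.mem_filter.mp hM').2
      have h𝓜U : ∀ M' ∈ 𝓜, M' \ {a₁} ⊆ U := by
        intro M' hM' b hb
        rw [Finset.mem_sdiff, Finset.mem_singleton] at hb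
        refine Finset.mem_erase.mpr ⟨hb.2, ?_⟩
        rcases Finset.mem_union.mp (Finset.mem_filter.mp hM').1 with h | h
        · exact Finset.mem_union_left _ (bmenus_subset_acts h hb.1)
        · exact Finset.mem_union_right _ (bmenus_subset_acts h hb.1)
      have ha₁U : a₁ ∉ U := fun h => (Finset.mem_erase.mp h).1 rfl
      have hωU : ω ∉ U := by
        intro h
        rcases Finset.mem_union.mp (Finset.mem_erase.mp h).2 with h' | h'
        · exact noOmega_acts (sizeOf s) s le_rfl hos h'
        · exact noOmega_acts (sizeOf t) t le_rfl hot h'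
      have heq : ∀ B ⊆ U, ∑ M' ∈ 𝓜,
          (RVar a₁ / ∑ b ∈ M' ∩ insert a₁ B, RVar b) * (cs M' - ct M') = 0 := by
        intro B hB
        have haB : a₁ ∉ B := fun h => ha₁U (hB h)
        have hωB : ω ∉ B := fun h => hωU (hB h)
        have h1 := hcs 𝓜 hM₁𝓜 h𝓜a
          (fun M' hM' hmem => Finset.mem_filter.mpr ⟨Finset.mem_union_left _ hM', hmem⟩)
          B haB hωB
        have h2 := hct 𝓜 hM₁𝓜 h𝓜a
          (fun M' hM' hmem => Finset.mem_filter.mpr ⟨Finset.mem_union_right _ hM', hmem⟩)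
          B haB hωB
        have h3 := hno (liftT a₁ (Proc.nd lT) B)
          (liftT_WF a₁ (Proc.nd lT) B haB hT'WF)
          (liftT_NoProb a₁ (Proc.nd lT) B hT'NP) _ _ h1 h2
        have h4 : ∑ M' ∈ 𝓜,
            ((RVar a₁ / ∑ b ∈ M' ∩ insert a₁ B, RVar b) * cs M'
              - (RVar a₁ / ∑ b ∈ M' ∩ insert a₁ B, RVar b) * ct M') = 0 := by
          rw [Finset.sum_sub_distrib, h3, sub_self]
        rw [← h4]
        apply Finset.sum_congr rfl
        intro M' _
        ring
      have hd := key a₁ U ha₁U 𝓜 h𝓜a h𝓜U (fun M' => cs M' - ct M') heq M₁ hM₁𝓜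
      rw [hcs1, hct1, hP1 M₁] at hd
      have hfact : algebraMap ℝ (RF A) (P1 t M₁) * (r₁ - r₂) = 0 := by
        linear_combination hd
      rcases mul_eq_zero.mp hfact with h | h
      · have hz : P1 t M₁ = 0 :=
          algR_injective (A := A) (show algR A (P1 t M₁) = algR A 0 by rw [map_zero]; exact h)
        rw [hz] at hpost
        exact lt_irrefl _ hpost
      · exact hrne (sub_eq_zero.mp h)

end PRTAux9

/-- If two processes are not probabilistically ready trace equivalent, then
there exists a test with no probabilistic transitions whose testing results on
the two processes differ. -/
theorem not_rtEquiv_implies_nonprob_distinguishing_test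
    {A : Type} [DecidableEq A] (ω : A)
    (s t : Proc A) (hs : Proc.WF s) (ht : Proc.WF t)
    (hsω : Proc.NoOmega ω s) (htω : Proc.NoOmega ω t)
    (h : ¬ Proc.RTEquiv s t) :
    ∃ T : Proc A, Proc.WF T ∧ Proc.NoProb T ∧
      ∃ r r' : RF A, Proc.ResRel ω s T r ∧ Proc.ResRel ω t T r' ∧ r ≠ r' := by
  have h' : ∃ tr M, Proc.Pn s tr M ≠ Proc.Pn t tr M := by
    by_contra hc
    push_neg at hc
    exact h (fun tr M => hc tr M)
  obtain ⟨tr, M, hne⟩ := h'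
  exact PRTAux9.strong ω tr.length s t hs ht hsω htω ⟨tr, M, le_rfl, hne⟩
end
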